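/- arXiv:1302.1629 — 5 statements merged into one kernel-verified Lean document; each statement's English description precedes it below -/
import Mathlib

section
/- In the root system of type B_l, letting t = 2r_1 + r_2 + ... + r_l, the Coxeter element w = w_1 ... w_l satisfies w^i(t) = r_{i+1} for 1 ≤ i ≤ l-1. -/
open Matrix

/-- The standard basis vector `e k` of `ℝ^n` (0-indexed). -/
noncomputable def basisVec (n k : ℕ) : Fin n → ℝ := fun j => if (j : ℕ) = k then 1 else 0

/-- Reflection through the hyperplane perpendicular to `v`. -/
noncomputable def reflect {n : ℕ} (v : Fin n → ℝ) (x : Fin n → ℝ) : Fin n → ℝ :=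
  x - (2 * (v ⬝ᵥ x) / (v ⬝ᵥ v)) • v

lemma dot_basis (l a : ℕ) (ha : a < l) (x : Fin l → ℝ) :
    basisVec l a ⬝ᵥ x = x ⟨a, ha⟩ := by
  rw [dotProduct, Finset.sum_eq_single (⟨a, ha⟩ : Fin l)]
  · simp [basisVec]
  · intro b _ hb
    simp only [basisVec]
    rw [if_neg, zero_mul]
    simp [Fin.ext_iff] at hb
    exact hb
  · simp

lemma basis_apply (l a : ℕ) (j : Fin l) : basisVec l a j = if (j:ℕ) = a then 1 else 0 := rfl

lemma reflect_basis0 (l : ℕ) (hl : 0 < l) (x : Fin l → ℝ) (j : Fin l) :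
    reflect (basisVec l 0) x j = if (j:ℕ) = 0 then -x j else x j := by
  have h1 : basisVec l 0 ⬝ᵥ basisVec l 0 = 1 := by rw [dot_basis l 0 hl]; simp [basisVec]
  have h2 : basisVec l 0 ⬝ᵥ x = x ⟨0, hl⟩ := dot_basis l 0 hl x
  simp only [reflect, h1, h2, Pi.sub_apply, Pi.smul_apply, smul_eq_mul, basis_apply]
  split
  · rename_i h
    have : j = ⟨0, hl⟩ := by simp [Fin.ext_iff, h]
    subst this; ring
  · ring

lemma reflect_swap (l a : ℕ) (ha : 1 ≤ a) (hal : a < l) (x : Fin l → ℝ) (j : Fin l) :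
    reflect (basisVec l a - basisVec l (a-1)) x j =
      if (j:ℕ) = a then x ⟨a-1, by omega⟩ else if (j:ℕ) = a-1 then x ⟨a, hal⟩ else x j := by
  have ha1 : a - 1 < l := by omega
  have hd : ∀ y : Fin l → ℝ, (basisVec l a - basisVec l (a-1)) ⬝ᵥ y = y ⟨a, hal⟩ - y ⟨a-1, ha1⟩ := by
    intro y
    rw [sub_dotProduct, dot_basis l a hal, dot_basis l (a-1) ha1]
  have hvv : (basisVec l a - basisVec l (a-1)) ⬝ᵥ (basisVec l a - basisVec l (a-1)) = 2 := by
    rw [hd]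
    simp only [Pi.sub_apply, basis_apply]
    rw [if_neg (show ¬(a = a - 1) by omega), if_neg (show ¬(a - 1 = a) by omega)]
    norm_num
  simp only [reflect, hvv, hd, Pi.sub_apply, Pi.smul_apply, smul_eq_mul, basis_apply]
  split
  · rename_i h
    have : j = ⟨a, hal⟩ := by simp [Fin.ext_iff, h]
    subst this
    rw [if_neg (by omega)]
    ring
  · split
    · rename_i h1 h2
      have : j = ⟨a-1, ha1⟩ := by simp [Fin.ext_iff, h2]
      subst this
      ring
    · ring

lemma fold_formula (l : ℕ) (r : ℕ → Fin l → ℝ)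
    (hr : ∀ i, 2 ≤ i → i ≤ l → r i = basisVec l (i - 1) - basisVec l (i - 2)) :
    ∀ (n s : ℕ) (hs : 1 ≤ s) (hsl : s + n ≤ l) (x : Fin l → ℝ) (j : Fin l),
    (List.range' s n).foldr (fun k f => reflect (r (k + 1)) ∘ f) id x j =
      if (j:ℕ) = s - 1 then x ⟨s + n - 1, by omega⟩
      else if s ≤ (j:ℕ) ∧ (j:ℕ) ≤ s + n - 1 then x ⟨(j:ℕ) - 1, by omega⟩ else x j := by
  intro n
  induction n with
  | zero =>
    intro s hs hsl x j
    simp only [List.range', List.foldr, id]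
    split
    · rename_i h
      congr 1
      simp only [Fin.ext_iff]
      exact h
    · rw [if_neg (by omega)]
  | succ n ih =>
    intro s hs hsl x j
    rw [List.range'_succ]
    simp only [List.foldr, Function.comp_apply]
    have hrs : r (s+1) = basisVec l s - basisVec l (s-1) := by
      have := hr (s+1) (by omega) (by omega)
      simpa using this
    rw [hrs, reflect_swap l s hs (by omega)]
    have ihy : ∀ (a : ℕ) (h : a < l),
        (List.range' (s+1) n).foldr (fun k f => reflect (r (k + 1)) ∘ f) id x ⟨a, h⟩ =
        if a = s then x ⟨s + n, by omega⟩
        else if s+1 ≤ a ∧ a ≤ s + n then x ⟨a - 1, by omega⟩ else x ⟨a, h⟩ := by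
      intro a h
      rw [ih (s+1) (by omega) (by omega) x ⟨a, h⟩]
      simp only [Fin.val_mk]
      split_ifs <;>
        first
          | rfl
          | (exfalso; omega)
          | (congr 1; simp only [Fin.ext_iff, Fin.val_mk]; omega)
    have hj := ihy (j : ℕ) j.2
    rw [Fin.eta] at hj
    rw [ihy, ihy, hj]
    split_ifs <;>
      first
        | rfl
        | (exfalso; omega)
        | (congr 1; simp only [Fin.ext_iff, Fin.val_mk]; omega)

/-- Type `B_l`: with `t = 2r_1 + r_2 + ⋯ + r_l` the highest root, the Coxeter element
`w = w_1 ⋯ w_l` satisfies `w^i (t) = r_{i+1}` for `1 ≤ i ≤ l-1`. -/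
theorem stmt_5 (l : ℕ) (hl : 2 ≤ l)
    (r : ℕ → Fin l → ℝ)
    (hr1 : r 1 = basisVec l 0)
    (hr : ∀ i, 2 ≤ i → i ≤ l → r i = basisVec l (i - 1) - basisVec l (i - 2))
    (w : (Fin l → ℝ) → (Fin l → ℝ))
    (hw : w = (List.range l).foldr (fun k f => reflect (r (k + 1)) ∘ f) id)
    (t : Fin l → ℝ) (ht : t = (2 : ℝ) • r 1 + ∑ k ∈ Finset.Icc 2 l, r k) :
    ∀ i, 1 ≤ i → i ≤ l - 1 → w^[i] t = r (i + 1) := by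
  have hl1 : l - 1 < l := by omega
  -- the explicit formula for w
  have hrange : List.range l = 0 :: List.range' 1 (l-1) := by
    rw [List.range_eq_range', show l = (l-1)+1 by omega, List.range'_succ]
    norm_num
  have wf : ∀ (x : Fin l → ℝ) (j : Fin l),
      w x j = if (j:ℕ) = 0 then -x ⟨l-1, hl1⟩ else x ⟨(j:ℕ)-1, by omega⟩ := by
    intro x j
    rw [hw, hrange]
    simp only [List.foldr, Function.comp_apply]
    rw [hr1, reflect_basis0 l (by omega)]
    rw [fold_formula l r hr (l-1) 1 le_rfl (by omega) x j]
    have hj2 := fold_formula l r hr (l-1) 1 le_rfl (by omega) x j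
    split_ifs <;>
      first
        | rfl
        | (exfalso; omega)
        | (congr 1 <;> (try congr 1) <;> simp only [Fin.ext_iff, Fin.val_mk] <;> omega)
  -- telescoping sum
  have tele : ∀ (f : ℕ → Fin l → ℝ),
      ∑ k ∈ Finset.Icc 2 l, (f (k-1) - f (k-2)) = f (l-1) - f 0 := by
    intro f
    have h : Finset.Icc 2 l =
        Finset.map ⟨fun i => i + 2, add_left_injective 2⟩ (Finset.range (l-1)) := by
      ext x
      simp only [Finset.mem_Icc, Finset.mem_map, Function.Embedding.coeFn_mk, Finset.mem_range]
      constructor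
      · intro hx; exact ⟨x-2, by omega, by omega⟩
      · rintro ⟨a, ha, rfl⟩; omega
    rw [h, Finset.sum_map]
    simp only [Function.Embedding.coeFn_mk]
    have : ∀ i ∈ Finset.range (l-1), f (i+2-1) - f (i+2-2) = f (i+1) - f i := by
      intro i _; norm_num
    rw [Finset.sum_congr rfl this, Finset.sum_range_sub f (l-1)]
  -- t = e_0 + e_{l-1}
  have ht' : ∀ j : Fin l, t j =
      (if (j:ℕ) = 0 then (1:ℝ) else 0) + (if (j:ℕ) = l-1 then 1 else 0) := by
    intro j
    have hsum : (∑ k ∈ Finset.Icc 2 l, r k) = basisVec l (l-1) - basisVec l 0 := by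
      have hcong : (∑ k ∈ Finset.Icc 2 l, r k) =
          ∑ k ∈ Finset.Icc 2 l, (basisVec l (k-1) - basisVec l (k-2)) :=
        Finset.sum_congr rfl (fun k hk => by
          rw [Finset.mem_Icc] at hk
          exact hr k hk.1 hk.2)
      rw [hcong]
      exact tele (fun m => basisVec l m)
    rw [ht]
    simp only [Pi.add_apply, Pi.smul_apply, smul_eq_mul, hsum, Pi.sub_apply, hr1, basis_apply]
    split_ifs <;> first | (exfalso; omega) | norm_num
  -- base case : w t = r 2
  have hbase : w t = r 2 := by
    funext j
    have hjl : (j:ℕ) < l := j.2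
    rw [wf, hr 2 le_rfl hl]
    simp only [Pi.sub_apply, basis_apply, Fin.val_mk]
    simp only [ht', Fin.val_mk]
    split_ifs <;> first | (exfalso; omega) | norm_num
  -- inductive step : w (r (i+1)) = r (i+2)
  have hstep : ∀ i, 1 ≤ i → i ≤ l-2 → w (r (i+1)) = r (i+2) := by
    intro i hi1 hi2
    funext j
    have hjl : (j:ℕ) < l := j.2
    rw [wf, hr (i+1) (by omega) (by omega), hr (i+2) (by omega) (by omega)]
    simp only [Pi.sub_apply, basis_apply, Fin.val_mk]
    split_ifs <;> first | (exfalso; omega) | norm_num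
  intro i
  induction i with
  | zero => omega
  | succ i ih =>
    intro _ hle
    rcases Nat.eq_zero_or_pos i with h0 | hpos
    · subst h0
      rw [Function.iterate_one]
      exact hbase
    · rw [Function.iterate_succ_apply', ih hpos (by omega)]
      have : i + 1 + 1 = i + 2 := rfl
      rw [this]
      exact hstep i hpos (by omega)
end

section
/- In the root system of type A_{2n-1} with fundamental roots r_1,...,r_{2n-1}, the element w = (w_1 w_{2n-1})(w_2 w_{2n-2})...(w_{n-1} w_{n+1}) w_n satisfies w(r_k) = r_{k+1} for 1 ≤ k ≤ n-2. Consequently w^i(r_1) = r_{i+1} for 1 ≤ i ≤ n-2. -/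
open Matrix

lemma dot_basis_s10 {N : ℕ} (a c : ℕ) (ha : a < N) :
    basisVec N a ⬝ᵥ basisVec N c = if a = c then 1 else 0 := by
  unfold basisVec dotProduct
  rw [Finset.sum_eq_single (⟨a, ha⟩ : Fin N)]
  · simp only [Fin.val_mk]
    by_cases h : a = c <;> simp [h]
  · intro j _ hj
    have : (j : ℕ) ≠ a := fun h => hj (Fin.ext h)
    simp [this]
  · simp

lemma reflect_basis_sub {N : ℕ} {a b c d : ℕ} (ha : a < N) (hb : b < N) (hab : a ≠ b) :
    reflect (basisVec N a - basisVec N b) (basisVec N c - basisVec N d)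
      = (basisVec N c - basisVec N d) -
        (((if a = c then (1:ℝ) else 0) - (if a = d then 1 else 0)) -
         ((if b = c then 1 else 0) - (if b = d then 1 else 0))) •
        (basisVec N a - basisVec N b) := by
  unfold reflect
  have hvv : (basisVec N a - basisVec N b) ⬝ᵥ (basisVec N a - basisVec N b) = 2 := by
    simp [sub_dotProduct, dotProduct_sub, dot_basis_s10 a a ha, dot_basis_s10 a b ha,
      dot_basis_s10 b a hb, dot_basis_s10 b b hb, hab, hab.symm]
    norm_num
  have hvx : (basisVec N a - basisVec N b) ⬝ᵥ (basisVec N c - basisVec N d)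
      = ((if a = c then (1:ℝ) else 0) - (if a = d then 1 else 0)) -
         ((if b = c then 1 else 0) - (if b = d then 1 else 0)) := by
    simp [sub_dotProduct, dotProduct_sub, dot_basis_s10 a c ha, dot_basis_s10 a d ha,
      dot_basis_s10 b c hb, dot_basis_s10 b d hb]
    ring
  rw [hvv, hvx]
  congr 1
  ring_nf

lemma reflect_fix {N : ℕ} {a b c d : ℕ} (ha : a < N) (hb : b < N) (hab : a ≠ b)
    (h1 : a ≠ c) (h2 : a ≠ d) (h3 : b ≠ c) (h4 : b ≠ d) :
    reflect (basisVec N a - basisVec N b) (basisVec N c - basisVec N d)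
      = basisVec N c - basisVec N d := by
  rw [reflect_basis_sub ha hb hab]
  simp [h1, h2, h3, h4]

lemma reflect_move_right {N : ℕ} {a b c : ℕ} (ha : a < N) (hb : b < N) (hab : a ≠ b)
    (h1 : c ≠ a) (h2 : c ≠ b) :
    reflect (basisVec N a - basisVec N b) (basisVec N c - basisVec N a)
      = basisVec N c - basisVec N b := by
  rw [reflect_basis_sub ha hb hab]
  simp [h1.symm, h2.symm, hab, hab.symm]

lemma reflect_move_left {N : ℕ} {a b d : ℕ} (ha : a < N) (hb : b < N) (hab : a ≠ b)
    (h1 : d ≠ a) (h2 : d ≠ b) :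
    reflect (basisVec N a - basisVec N b) (basisVec N a - basisVec N d)
      = basisVec N b - basisVec N d := by
  rw [reflect_basis_sub ha hb hab]
  simp [h1.symm, h2.symm, hab, hab.symm]

/-- Type `A_{2n-1}` with fundamental roots `r i = e_{i-1} - e_i` in `ℝ^{2n}`:
the twisted Coxeter element `w = (w_1 w_{2n-1})(w_2 w_{2n-2}) ⋯ (w_{n-1} w_{n+1}) w_n`
satisfies `w (r k) = r (k+1)` for `1 ≤ k ≤ n-2`, and consequently
`w^i (r 1) = r (i+1)` for `1 ≤ i ≤ n-2`. -/
theorem stmt_10 (n : ℕ) (hn : 2 ≤ n)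
    (r : ℕ → Fin (2 * n) → ℝ)
    (hr : ∀ i, 1 ≤ i → i ≤ 2 * n - 1 → r i = basisVec (2 * n) (i - 1) - basisVec (2 * n) i)
    (w : (Fin (2 * n) → ℝ) → (Fin (2 * n) → ℝ))
    (hw : w = (List.range (n - 1)).foldr
      (fun k f => reflect (r (k + 1)) ∘ reflect (r (2 * n - 1 - k)) ∘ f) (reflect (r n))) :
    (∀ k, 1 ≤ k → k ≤ n - 2 → w (r k) = r (k + 1)) ∧
    ∀ i, 1 ≤ i → i ≤ n - 2 → w^[i] (r 1) = r (i + 1) := by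
  have key : ∀ k, 1 ≤ k → k ≤ n - 2 → w (r k) = r (k + 1) := by
    intro k hk1 hk2
    have hn3 : 3 ≤ n := by omega
    have aux : ∀ m j, j + m = n - 1 →
        (List.range' j m).foldr
          (fun k f => reflect (r (k + 1)) ∘ reflect (r (2 * n - 1 - k)) ∘ f)
          (reflect (r n)) (r k)
        = if k < j then r k
          else if j = k then basisVec (2*n) (k-1) - basisVec (2*n) (k+1)
          else r (k+1) := by
      intro m
      induction m with
      | zero =>
        intro j hj
        have hjk : k < j := by omega
        rw [if_pos hjk]
        simp only [List.range'_zero, List.foldr_nil]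
        rw [hr n (by omega) (by omega), hr k (by omega) (by omega)]
        exact reflect_fix (by omega) (by omega) (by omega) (by omega) (by omega) (by omega) (by omega)
      | succ m ih =>
        intro j hj
        rw [List.range'_succ, List.foldr_cons]
        simp only [Function.comp_apply]
        rw [ih (j+1) (by omega)]
        rcases lt_trichotomy k j with h | h | h
        · -- k < j : everything fixes r k
          rw [if_pos (by omega : k < j + 1), if_pos h]
          rw [hr k (by omega) (by omega),
              hr (2*n-1-j) (by omega) (by omega), hr (j+1) (by omega) (by omega)]
          rw [reflect_fix (by omega) (by omega) (by omega) (by omega) (by omega) (by omega) (by omega)]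
          exact reflect_fix (by omega) (by omega) (by omega) (by omega) (by omega) (by omega) (by omega)
        · -- j = k
          rw [if_pos (show k < j + 1 by omega), if_neg (show ¬ k < j by omega),
              if_pos (show j = k by omega)]
          rw [hr k (by omega) (by omega),
              hr (2*n-1-j) (by omega) (by omega), hr (j+1) (by omega) (by omega)]
          rw [reflect_fix (by omega) (by omega) (by omega) (by omega) (by omega) (by omega) (by omega)]
          -- reflect (e_j - e_{j+1}) (e_{k-1} - e_k)  with j = k : move_right with a = k, b = k+1, c = k-1
          have : j + 1 - 1 = k := by omega
          rw [this, h.symm]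
          exact reflect_move_right (by omega) (by omega) (by omega) (by omega) (by omega)
        · -- j < k
          rw [if_neg (show ¬ k < j by omega), if_neg (show j ≠ k by omega)]
          rcases eq_or_lt_of_le (by omega : j + 1 ≤ k) with h2 | h2
          · -- j + 1 = k : incoming is basis diff via if j+1 = k
            rw [if_neg (show ¬ k < j + 1 by omega), if_pos (show j + 1 = k from h2)]
            rw [hr (2*n-1-j) (by omega) (by omega), hr (j+1) (by omega) (by omega), hr (k+1) (by omega) (by omega)]
            rw [reflect_fix (by omega) (by omega) (by omega) (by omega) (by omega) (by omega) (by omega)]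
            -- reflect (e_{k-1} - e_k) (e_{k-1} - e_{k+1}) = e_k - e_{k+1}
            have e1 : j + 1 - 1 = k - 1 := by omega
            have e2 : j + 1 = k := h2
            have e3 : k + 1 - 1 = k := by omega
            rw [e1, e2, e3]
            exact reflect_move_left (by omega) (by omega) (by omega) (by omega) (by omega)
          · -- j + 1 < k : incoming is r (k+1), fixed
            rw [if_neg (show ¬ k < j + 1 by omega), if_neg (show j + 1 ≠ k by omega)]
            rw [hr (2*n-1-j) (by omega) (by omega), hr (j+1) (by omega) (by omega), hr (k+1) (by omega) (by omega)]
            rw [reflect_fix (by omega) (by omega) (by omega) (by omega) (by omega) (by omega) (by omega)]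
            exact reflect_fix (by omega) (by omega) (by omega) (by omega) (by omega) (by omega) (by omega)
    rw [hw, List.range_eq_range', aux (n-1) 0 (by omega),
        if_neg (by omega), if_neg (by omega)]
  refine ⟨key, ?_⟩
  intro i hi1 hi2
  induction i with
  | zero => omega
  | succ i ih =>
    rcases Nat.lt_or_ge 0 i with h | h
    · rw [Function.iterate_succ_apply', ih (by omega) (by omega),
        key (i+1) (by omega) (by omega)]
    · have : i = 0 := by omega
      subst this
      rw [Function.iterate_one]
      exact key 1 (by omega) (by omega)
end

section
/- In the root system of type A_{2n} with fundamental roots r_1,...,r_{2n}, the element w = (w_n w_{n+1} w_n)(w_{n-1} w_{n+2})...(w_1 w_{2n}) satisfies w(r_{n-k}) = r_{n-k-1} for 1 ≤ k ≤ n-2 and w(r_n) = r_{n-1} + r_n. Consequently w^i(r_n) = r_n + r_{n-1} + ... + r_{n-i} for 0 ≤ i ≤ n-2. -/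
open Matrix

def swapN (a b j : ℕ) : ℕ := if j = a then b else if j = b then a else j

lemma swapN_lt {N a b j : ℕ} (ha : a < N) (hb : b < N) (hj : j < N) : swapN a b j < N := by
  unfold swapN; split_ifs <;> omega

lemma basis_dot {N a : ℕ} (ha : a < N) (x : Fin N → ℝ) :
    basisVec N a ⬝ᵥ x = x ⟨a, ha⟩ := by
  unfold basisVec dotProduct
  have h : ∀ j : Fin N, ((j : ℕ) = a) = (j = ⟨a, ha⟩) := fun j => by
    simp [Fin.ext_iff]
  simp only [h, ite_mul, one_mul, zero_mul]
  simp

lemma reflect_swap_s11 {N a b : ℕ} (ha : a < N) (hb : b < N) (hab : a ≠ b)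
    (x : Fin N → ℝ) (j : Fin N) :
    reflect (basisVec N a - basisVec N b) x j =
      x ⟨swapN a b (j : ℕ), swapN_lt ha hb j.isLt⟩ := by
  have hd : ∀ y : Fin N → ℝ, (basisVec N a - basisVec N b) ⬝ᵥ y = y ⟨a, ha⟩ - y ⟨b, hb⟩ := by
    intro y; rw [sub_dotProduct, basis_dot ha, basis_dot hb]
  have hvv : (basisVec N a - basisVec N b) ⬝ᵥ (basisVec N a - basisVec N b) = 2 := by
    rw [hd]
    simp only [Pi.sub_apply, basisVec]
    simp [hab, Ne.symm hab]
    norm_num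
  unfold reflect
  rw [hd x, hvv]
  simp only [Pi.sub_apply, Pi.smul_apply, smul_eq_mul, basisVec, swapN]
  have hj := j.isLt
  rcases eq_or_ne (j : ℕ) a with h1 | h1 <;> rcases eq_or_ne (j : ℕ) b with h2 | h2
  · omega
  · have : j = ⟨a, ha⟩ := Fin.ext h1
    subst this
    simp [h1, h2, hab]
    try ring
  · have : j = ⟨b, hb⟩ := Fin.ext h2
    subst this
    simp [h1, h2, Ne.symm hab]
    try ring
  · simp [h1, h2]

lemma foldr_comp {α : Type*} (g : ℕ → (α → α)) (a : α → α) (l : List ℕ) :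
    l.foldr (fun k f => g k ∘ f) a = l.foldr (fun k f => g k ∘ f) id ∘ a := by
  induction l with
  | nil => rfl
  | cons h t ih => simp only [List.foldr_cons, ih]; rfl

def fm (n m j : ℕ) : ℕ :=
  if j < n - 1 - m then j
  else if j < n - 1 then j + 1
  else if j = n - 1 then n - 1 - m
  else if j = n then n
  else if j = n + 1 then n + 1 + m
  else if j ≤ n + 1 + m then j - 1
  else j

lemma fm_lt {n m j : ℕ} (hm : m ≤ n - 1) (hj : j < 2 * n + 1) : fm n m j < 2 * n + 1 := by
  unfold fm; split_ifs <;> omega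

def sig (n j : ℕ) : ℕ :=
  if j < n - 1 then j + 1
  else if j = n - 1 then 2 * n
  else if j = n then n
  else if j = n + 1 then 0
  else j - 1

lemma sig_lt {n j : ℕ} (hn : 1 ≤ n) (hj : j < 2 * n + 1) : sig n j < 2 * n + 1 := by
  unfold sig; split_ifs <;> omega

lemma foldr_comp₂ {α : Type*} (g h : ℕ → (α → α)) (a : α → α) (l : List ℕ) :
    l.foldr (fun k f => g k ∘ h k ∘ f) a = l.foldr (fun k f => g k ∘ h k ∘ f) id ∘ a := by
  induction l with
  | nil => rfl
  | cons c t ih => simp only [List.foldr_cons, ih]; rfl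

set_option maxHeartbeats 2000000 in
lemma step_idx (n m j : ℕ) (hn : 2 ≤ n) (hm : m + 1 ≤ n - 1) (hj : j < 2 * n + 1) :
    swapN (n + 2 + m - 1) (n + 2 + m) (swapN (n - 1 - m - 1) (n - 1 - m) (fm n m j))
      = fm n (m + 1) j := by
  rcases (by omega : j < n - 2 - m ∨ j = n - 2 - m ∨ (n - 1 - m ≤ j ∧ j < n - 1) ∨ j = n - 1 ∨ j = n ∨ j = n + 1 ∨ (n + 2 ≤ j ∧ j ≤ n + 1 + m) ∨ j = n + 2 + m ∨ n + 2 + m < j) with h|h|h|h|h|h|h|h|h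
  · have A : fm n m j = j := by unfold fm; split_ifs <;> omega
    have B : fm n (m + 1) j = j := by unfold fm; split_ifs <;> omega
    rw [A, B]; unfold swapN; split_ifs <;> omega
  · have A : fm n m j = j := by unfold fm; split_ifs <;> omega
    have B : fm n (m + 1) j = j + 1 := by unfold fm; split_ifs <;> omega
    rw [A, B]; unfold swapN; split_ifs <;> omega
  · have A : fm n m j = j + 1 := by unfold fm; split_ifs <;> omega
    have B : fm n (m + 1) j = j + 1 := by unfold fm; split_ifs <;> omega
    rw [A, B]; unfold swapN; split_ifs <;> omega
  · have A : fm n m j = n - 1 - m := by unfold fm; split_ifs <;> omega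
    have B : fm n (m + 1) j = n - 2 - m := by unfold fm; split_ifs <;> omega
    rw [A, B]; unfold swapN; split_ifs <;> omega
  · have A : fm n m j = n := by unfold fm; split_ifs <;> omega
    have B : fm n (m + 1) j = n := by unfold fm; split_ifs <;> omega
    rw [A, B]; unfold swapN; split_ifs <;> omega
  · have A : fm n m j = n + 1 + m := by unfold fm; split_ifs <;> omega
    have B : fm n (m + 1) j = n + 2 + m := by unfold fm; split_ifs <;> omega
    rw [A, B]; unfold swapN; split_ifs <;> omega
  · have A : fm n m j = j - 1 := by unfold fm; split_ifs <;> omega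
    have B : fm n (m + 1) j = j - 1 := by unfold fm; split_ifs <;> omega
    rw [A, B]; unfold swapN; split_ifs <;> omega
  · have A : fm n m j = j := by unfold fm; split_ifs <;> omega
    have B : fm n (m + 1) j = n + 1 + m := by unfold fm; split_ifs <;> omega
    rw [A, B]; unfold swapN; split_ifs <;> omega
  · have A : fm n m j = j := by unfold fm; split_ifs <;> omega
    have B : fm n (m + 1) j = j := by unfold fm; split_ifs <;> omega
    rw [A, B]; unfold swapN; split_ifs <;> omega

lemma fold_eval (n : ℕ) (hn : 2 ≤ n) (r : ℕ → Fin (2 * n + 1) → ℝ)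
    (hr : ∀ i, 1 ≤ i → i ≤ 2 * n →
      r i = basisVec (2 * n + 1) (i - 1) - basisVec (2 * n + 1) i) :
    ∀ m, ∀ hm : m ≤ n - 1, ∀ (x : Fin (2 * n + 1) → ℝ) (j : Fin (2 * n + 1)),
      ((List.range m).foldr
        (fun k f => reflect (r (n - 1 - k)) ∘ reflect (r (n + 2 + k)) ∘ f) id) x j
        = x ⟨fm n m (j : ℕ), fm_lt hm j.isLt⟩ := by
  intro m
  induction m with
  | zero =>
    intro hm x j
    have h0 : fm n 0 (j : ℕ) = (j : ℕ) := by unfold fm; split_ifs <;> omega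
    simp only [List.range_zero, List.foldr_nil, id]
    congr 1
    exact Fin.ext h0.symm
  | succ m ih =>
    intro hm x j
    have hm' : m ≤ n - 1 := by omega
    rw [List.range_succ, List.foldr_append, List.foldr_cons, List.foldr_nil,
      foldr_comp₂]
    simp only [Function.comp_apply, id]
    rw [ih hm']
    rw [hr (n - 1 - m) (by omega) (by omega), hr (n + 2 + m) (by omega) (by omega)]
    rw [reflect_swap_s11 (by omega) (by omega) (by omega),
      reflect_swap_s11 (by omega) (by omega) (by omega)]
    congr 1
    exact Fin.ext (step_idx n m (j : ℕ) hn hm j.isLt)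

set_option maxHeartbeats 2000000 in
lemma final_idx (n j : ℕ) (hn : 2 ≤ n) (hj : j < 2 * n + 1) :
    fm n (n - 1) (swapN (n - 1) n (swapN n (n + 1) (swapN (n - 1) n j))) = sig n j := by
  rcases (by omega : j < n - 1 ∨ j = n - 1 ∨ j = n ∨ j = n + 1 ∨ n + 1 < j)
    with h|h|h|h|h <;>
  · have A : swapN (n - 1) n (swapN n (n + 1) (swapN (n - 1) n j)) =
      (if j < n - 1 then j else if j = n - 1 then n + 1 else if j = n then n
        else if j = n + 1 then n - 1 else j) := by
      unfold swapN; split_ifs <;> omega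
    rw [A]; unfold fm sig; split_ifs <;> omega

lemma w_eval (n : ℕ) (hn : 2 ≤ n) (r : ℕ → Fin (2 * n + 1) → ℝ)
    (hr : ∀ i, 1 ≤ i → i ≤ 2 * n →
      r i = basisVec (2 * n + 1) (i - 1) - basisVec (2 * n + 1) i)
    (w : (Fin (2 * n + 1) → ℝ) → (Fin (2 * n + 1) → ℝ))
    (hw : w = reflect (r n) ∘ reflect (r (n + 1)) ∘ reflect (r n) ∘
      (List.range (n - 1)).foldr
        (fun k f => reflect (r (n - 1 - k)) ∘ reflect (r (n + 2 + k)) ∘ f) id)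
    (x : Fin (2 * n + 1) → ℝ) (j : Fin (2 * n + 1)) :
    w x j = x ⟨sig n (j : ℕ), sig_lt (by omega) j.isLt⟩ := by
  subst hw
  simp only [Function.comp_apply]
  rw [hr n (by omega) (by omega), hr (n + 1) (by omega) (by omega)]
  rw [reflect_swap_s11 (by omega) (by omega) (by omega)]
  rw [reflect_swap_s11 (by omega) (by omega) (by omega)]
  rw [reflect_swap_s11 (by omega) (by omega) (by omega)]
  rw [fold_eval n hn r hr (n - 1) le_rfl]
  congr 1
  exact Fin.ext (final_idx n (j : ℕ) hn j.isLt)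

set_option maxHeartbeats 2000000 in
/-- Type `A_{2n}` with fundamental roots `r i = e_{i-1} - e_i` in `ℝ^{2n+1}`:
the twisted Coxeter element `w = (w_n w_{n+1} w_n)(w_{n-1} w_{n+2}) ⋯ (w_1 w_{2n})`
satisfies `w (r_{n-k}) = r_{n-k-1}` for `1 ≤ k ≤ n-2` and `w (r n) = r_{n-1} + r_n`;
consequently `w^i (r n) = r_n + r_{n-1} + ⋯ + r_{n-i}` for `0 ≤ i ≤ n-2`. -/
theorem stmt_11 (n : ℕ) (hn : 2 ≤ n)
    (r : ℕ → Fin (2 * n + 1) → ℝ)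
    (hr : ∀ i, 1 ≤ i → i ≤ 2 * n →
      r i = basisVec (2 * n + 1) (i - 1) - basisVec (2 * n + 1) i)
    (w : (Fin (2 * n + 1) → ℝ) → (Fin (2 * n + 1) → ℝ))
    (hw : w = reflect (r n) ∘ reflect (r (n + 1)) ∘ reflect (r n) ∘
      (List.range (n - 1)).foldr
        (fun k f => reflect (r (n - 1 - k)) ∘ reflect (r (n + 2 + k)) ∘ f) id) :
    (∀ k, 1 ≤ k → k ≤ n - 2 → w (r (n - k)) = r (n - k - 1)) ∧
    w (r n) = r (n - 1) + r n ∧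
    ∀ i, i ≤ n - 2 → w^[i] (r n) = ∑ k ∈ Finset.Icc (n - i) n, r k := by

  have hW : ∀ x (j : Fin (2 * n + 1)),
      w x j = x ⟨sig n (j : ℕ), sig_lt (by omega) j.isLt⟩ :=
    w_eval n hn r hr w hw
  have parta : ∀ k, 1 ≤ k → k ≤ n - 2 → w (r (n - k)) = r (n - k - 1) := by
    intro k hk1 hk2
    funext j
    have hj := j.isLt
    rw [hW, hr (n - k) (by omega) (by omega), hr (n - k - 1) (by omega) (by omega)]
    simp only [Pi.sub_apply, basisVec]
    unfold sig
    split_ifs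
    all_goals first | omega | norm_num
  have partb : w (r n) = r (n - 1) + r n := by
    funext j
    have hj := j.isLt
    rw [hW, hr n (by omega) (by omega), hr (n - 1) (by omega) (by omega)]
    simp only [Pi.add_apply, Pi.sub_apply, basisVec]
    unfold sig
    split_ifs
    all_goals first | omega | norm_num
  refine ⟨parta, partb, ?_⟩
  have hwsum : ∀ s : Finset ℕ, w (∑ k ∈ s, r k) = ∑ k ∈ s, w (r k) := by
    intro s
    funext j
    rw [hW]
    simp only [Finset.sum_apply]
    exact Finset.sum_congr rfl fun k _ => (hW (r k) j).symm
  intro i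
  induction i with
  | zero =>
    intro _
    simp
  | succ i ih =>
    intro hi
    rw [Function.iterate_succ_apply', ih (by omega), hwsum]
    have e1 : Finset.Icc (n - i) n = insert n (Finset.Icc (n - i) (n - 1)) := by
      ext a; simp only [Finset.mem_Icc, Finset.mem_insert]; omega
    have e2 : Finset.Icc (n - (i + 1)) n = insert n (Finset.Icc (n - (i + 1)) (n - 1)) := by
      ext a; simp only [Finset.mem_Icc, Finset.mem_insert]; omega
    rw [e1, e2]
    rw [Finset.sum_insert (by simp only [Finset.mem_Icc]; omega),
      Finset.sum_insert (by simp only [Finset.mem_Icc]; omega)]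
    rw [partb]
    have hcong : ∀ k ∈ Finset.Icc (n - i) (n - 1), w (r k) = r (k - 1) := by
      intro k hk
      simp only [Finset.mem_Icc] at hk
      have h1 : n - (n - k) = k := by omega
      have h2 := parta (n - k) (by omega) (by omega)
      rw [h1] at h2
      exact h2
    rw [Finset.sum_congr rfl hcong]
    have e5 : ∑ k ∈ Finset.Icc (n - i) (n - 1), r (k - 1)
        = ∑ k ∈ Finset.Icc (n - i - 1) (n - 2), r k := by
      rw [show Finset.Icc (n - i) (n - 1)
          = (Finset.Icc (n - i - 1) (n - 2)).map (addRightEmbedding 1) from by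
        rw [Finset.map_add_right_Icc]; congr 1 <;> omega]
      rw [Finset.sum_map]
      refine Finset.sum_congr rfl fun k _ => ?_
      simp [addRightEmbedding]
    have e6 : ∑ k ∈ Finset.Icc (n - (i + 1)) (n - 1), r k
        = r (n - (i + 1)) + ∑ k ∈ Finset.Icc (n - i) (n - 1), r k := by
      rw [show Finset.Icc (n - (i + 1)) (n - 1)
          = insert (n - (i + 1)) (Finset.Icc (n - i) (n - 1)) from by
        ext a; simp only [Finset.mem_Icc, Finset.mem_insert]; omega]
      rw [Finset.sum_insert (by simp only [Finset.mem_Icc]; omega)]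
    have e7 : ∑ k ∈ Finset.Icc (n - (i + 1)) (n - 1), r k
        = r (n - 1) + ∑ k ∈ Finset.Icc (n - i - 1) (n - 2), r k := by
      rw [show Finset.Icc (n - (i + 1)) (n - 1)
          = insert (n - 1) (Finset.Icc (n - i - 1) (n - 2)) from by
        ext a; simp only [Finset.mem_Icc, Finset.mem_insert]; omega]
      rw [Finset.sum_insert (by simp only [Finset.mem_Icc]; omega)]
    rw [e5]
    linear_combination -e7
end

section
/- For every l ≥ 1 and every prime power q, the matrices A = I + e_{1,2} (elementary transvection T_{1,2}(1)), B the (l+1)×(l+1) matrix with (1, l+1) entry (-1)^l, subdiagonal entries 1 and zeros elsewhere, and C = diag(λ^{-1}, λ, 1, ..., 1) where λ generates GF(q)^*, together generate SL(l+1, q). -/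
open Matrix


open Matrix
open Fin.NatCast

section AuxGeneral

variable {n : Type*} [Fintype n] [DecidableEq n] {F : Type*} [Field F]

omit [Fintype n] in
lemma aux_transvection_apply (i j x y : n) (c : F) :
    transvection i j c x y = (if x = y then 1 else 0) + (if i = x ∧ j = y then c else 0) := by
  simp [transvection, Matrix.add_apply, one_apply, single_apply]

lemma aux_six_transvection (i j : n) (hij : i ≠ j) (a : F) (ha : a ≠ 0) :
    transvection i j a * (transvection j i (-a⁻¹) * (transvection i j a *
      (transvection i j (-1) * (transvection j i 1 * transvection i j (-1))))) =
    diagonal (fun k => if k = i then a else if k = j then a⁻¹ else 1) := by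
  have hji := hij.symm
  ext x y
  by_cases hx : x = i
  · subst hx
    simp only [transvection_mul_apply_same, transvection_mul_apply_of_ne _ _ _ _ hij,
      aux_transvection_apply, diagonal_apply, hij, hji]
    by_cases hy : y = x <;> by_cases hy2 : y = j <;>
      simp_all [aux_transvection_apply, hij, hji, eq_comm] <;> field_simp <;> ring
  · by_cases hx2 : x = j
    · subst hx2
      simp only [transvection_mul_apply_same, transvection_mul_apply_of_ne _ _ _ _ hji,
        aux_transvection_apply, diagonal_apply, hij, hji]
      by_cases hy : y = i <;> by_cases hy2 : y = x <;>
        simp_all [aux_transvection_apply, hij, hji, eq_comm] <;> field_simp <;> ring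
    · simp only [transvection_mul_apply_of_ne _ _ _ _ hx, transvection_mul_apply_of_ne _ _ _ _ hx2,
        aux_transvection_apply, diagonal_apply]
      by_cases hy : x = y <;> simp_all [hx, hx2, eq_comm]

lemma aux_comm_transvection (i k j : n) (hik : i ≠ k) (hkj : k ≠ j) (hij : i ≠ j) (c : F) :
    transvection i k c * (transvection k j 1 * (transvection i k (-c) * transvection k j (-1))) =
    transvection i j c := by
  have hki := hik.symm; have hjk := hkj.symm; have hji := hij.symm
  ext x y
  by_cases hx : x = i
  · subst hx
    simp only [transvection_mul_apply_same, transvection_mul_apply_of_ne _ _ _ _ hij,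
      transvection_mul_apply_of_ne _ _ _ _ hik, aux_transvection_apply]
    by_cases hy : y = x <;> by_cases hy2 : y = j <;> by_cases hy3 : y = k <;>
      simp_all [aux_transvection_apply, eq_comm] <;> ring
  · by_cases hx2 : x = k
    · subst hx2
      simp only [transvection_mul_apply_same, transvection_mul_apply_of_ne _ _ _ _ hki,
        transvection_mul_apply_of_ne _ _ _ _ hkj, aux_transvection_apply]
      by_cases hy : y = x <;> by_cases hy2 : y = j <;> by_cases hy3 : y = i <;>
        simp_all [aux_transvection_apply, eq_comm] <;> ring
    · simp only [transvection_mul_apply_of_ne _ _ _ _ hx, transvection_mul_apply_of_ne _ _ _ _ hx2,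
        aux_transvection_apply]
      by_cases hy : x = y <;> simp_all [aux_transvection_apply, eq_comm]

lemma aux_prod_ite_pair (i j : n) (hij : i ≠ j) (x y : F) (z : n → F) :
    ∏ k, (if k = i then x else if k = j then y else z k) =
      x * (y * ∏ k ∈ (Finset.univ.erase i).erase j, z k) := by
  have e1 : ∀ k ∈ (Finset.univ.erase i).erase j,
      (if k = i then x else if k = j then y else z k) = z k := by
    intro k hk
    simp only [Finset.mem_erase] at hk
    simp [hk.1, hk.2.1]
  rw [← Finset.mul_prod_erase Finset.univ _ (Finset.mem_univ i),
      ← Finset.mul_prod_erase _ _ (Finset.mem_erase.mpr ⟨hij.symm, Finset.mem_univ j⟩),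
      Finset.prod_congr rfl e1]
  simp [hij.symm]

theorem aux_eq_top_of_transvections_mem (H : Subgroup (SpecialLinearGroup n F))
    (hT : ∀ (i j : n), i ≠ j → ∀ (c : F) (g : SpecialLinearGroup n F),
      (g : Matrix n n F) = transvection i j c → g ∈ H) : H = ⊤ := by
  classical
  have hpair : ∀ (i j : n), i ≠ j → ∀ (a : F), a ≠ 0 → ∀ g : SpecialLinearGroup n F,
      (g : Matrix n n F) = diagonal (fun k => if k = i then a else if k = j then a⁻¹ else 1) →
      g ∈ H := by
    intro i j hij a ha g hg
    have d1 : det (transvection i j a) = 1 := det_transvection_of_ne _ _ hij _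
    have d2 : det (transvection j i (-a⁻¹)) = 1 := det_transvection_of_ne _ _ hij.symm _
    have d3 : det (transvection i j (-1 : F)) = 1 := det_transvection_of_ne _ _ hij _
    have d4 : det (transvection j i (1 : F)) = 1 := det_transvection_of_ne _ _ hij.symm _
    set g1 : SpecialLinearGroup n F := ⟨_, d1⟩
    set g2 : SpecialLinearGroup n F := ⟨_, d2⟩
    set g3 : SpecialLinearGroup n F := ⟨_, d3⟩
    set g4 : SpecialLinearGroup n F := ⟨_, d4⟩
    have : g = g1 * (g2 * (g1 * (g3 * (g4 * g3)))) := by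
      apply Subtype.ext
      rw [hg, ← aux_six_transvection i j hij a ha]
      rfl
    rw [this]
    exact mul_mem (hT i j hij a g1 rfl) (mul_mem (hT j i hij.symm _ g2 rfl)
      (mul_mem (hT i j hij a g1 rfl) (mul_mem (hT i j hij _ g3 rfl)
      (mul_mem (hT j i hij.symm _ g4 rfl) (hT i j hij _ g3 rfl)))))
  have hdiag : ∀ (N : ℕ) (d : n → F), (∀ i, d i ≠ 0) → (Finset.univ.filter (d · ≠ 1)).card ≤ N →
      ∀ g : SpecialLinearGroup n F, (g : Matrix n n F) = diagonal d → g ∈ H := by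
    intro N
    induction N with
    | zero =>
      intro d hd hcard g hg
      have h1 : ∀ i, d i = 1 := by
        intro i
        by_contra hi
        have : (Finset.univ.filter (d · ≠ 1)).Nonempty := ⟨i, by simp [hi]⟩
        have := Finset.card_pos.mpr this
        omega
      have : g = 1 := Subtype.ext (by rw [hg]; ext x y; simp [diagonal_apply, h1, one_apply])
      rw [this]; exact one_mem H
    | succ N ih =>
      intro d hd hcard g hg
      by_cases h1 : ∀ i, d i = 1
      · have : g = 1 := Subtype.ext (by rw [hg]; ext x y; simp [diagonal_apply, h1, one_apply])
        rw [this]; exact one_mem H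
      push_neg at h1
      obtain ⟨i, hi⟩ := h1
      have hdet1 : ∏ k, d k = 1 := by
        have := g.2; rw [hg, det_diagonal] at this; exact this
      have hexj : ∃ j, j ≠ i ∧ d j ≠ 1 := by
        by_contra hno
        push_neg at hno
        apply hi
        calc d i = ∏ k, d k := by
              rw [Finset.prod_eq_single i] <;> intros <;> first | rfl | exact hno _ ‹_› | simp_all
          _ = 1 := hdet1
      obtain ⟨j, hji, hj⟩ := hexj
      have hij : i ≠ j := hji.symm
      set d' : n → F := fun k => if k = i then 1 else if k = j then d i * d j else d k with hd'
      have hd'0 : ∀ k, d' k ≠ 0 := by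
        intro k; simp only [hd']
        split_ifs with h h2
        · exact one_ne_zero
        · exact mul_ne_zero (hd i) (hd j)
        · exact hd k
      have hcard' : (Finset.univ.filter (d' · ≠ 1)).card ≤ N := by
        have hsub : (Finset.univ.filter (d' · ≠ 1)) ⊆
            (Finset.univ.filter (d · ≠ 1)).erase i := by
          intro k hk
          simp only [Finset.mem_filter, Finset.mem_erase, Finset.mem_univ, true_and] at hk ⊢
          simp only [hd'] at hk
          rcases eq_or_ne k i with rfl | hki
          · simp at hk
          refine ⟨hki, ?_⟩
          rcases eq_or_ne k j with rfl | hkj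
          · exact hj
          · simpa [hki, hkj] using hk
        have h3 := Finset.card_le_card hsub
        have h2 : i ∈ Finset.univ.filter (d · ≠ 1) := by simp [hi]
        have h4 := Finset.card_erase_of_mem h2
        omega
      have hdrw : ∏ k, d k = d i * (d j * ∏ k ∈ (Finset.univ.erase i).erase j, d k) := by
        rw [← aux_prod_ite_pair i j hij (d i) (d j) d]
        apply Finset.prod_congr rfl
        intro k _
        split_ifs with h h2 <;> simp_all
      have hdet' : det (diagonal d') = 1 := by
        rw [det_diagonal]
        simp only [hd']
        rw [aux_prod_ite_pair i j hij _ _ d, one_mul, mul_assoc, ← hdrw, hdet1]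
      have hdetp : det (diagonal
          (fun k => if k = i then d i else if k = j then (d i)⁻¹ else 1)) = 1 := by
        rw [det_diagonal, aux_prod_ite_pair i j hij _ _ (fun _ => 1)]
        simp [mul_inv_cancel₀ (hd i)]
      set gp : SpecialLinearGroup n F := ⟨_, hdetp⟩
      set g'' : SpecialLinearGroup n F := ⟨_, hdet'⟩
      have hfun : (fun k => if k = i then d i else if k = j then (d i)⁻¹ else 1) * d' = d := by
        funext k
        simp only [Pi.mul_apply, hd']
        split_ifs with h h2
        · subst h; simp
        · subst h2; exact inv_mul_cancel_left₀ (hd i) (d k)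
        · simp
      have hfac : g = gp * g'' := by
        apply Subtype.ext
        show (g : Matrix n n F) = diagonal _ * diagonal _
        rw [hg, diagonal_mul_diagonal]
        exact (congrArg diagonal hfun).symm
      rw [hfac]
      exact mul_mem (hpair i j hij (d i) (hd i) gp rfl) (ih d' hd'0 hcard' g'' rfl)
  have hlist : ∀ (L : List (TransvectionStruct n F)) (g : SpecialLinearGroup n F),
      (g : Matrix n n F) = (L.map TransvectionStruct.toMatrix).prod → g ∈ H := by
    intro L
    induction L with
    | nil =>
      intro g hg
      have : g = 1 := Subtype.ext (by simpa using hg)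
      rw [this]; exact one_mem H
    | cons t L ihL =>
      intro g hg
      have hdt : det t.toMatrix = 1 := t.det
      have hdL : det (L.map TransvectionStruct.toMatrix).prod = 1 :=
        TransvectionStruct.det_toMatrix_prod L
      set gt : SpecialLinearGroup n F := ⟨_, hdt⟩
      set gL : SpecialLinearGroup n F := ⟨_, hdL⟩
      have : g = gt * gL := by
        apply Subtype.ext
        rw [hg]
        simp [List.map_cons, List.prod_cons]
        rfl
      rw [this]
      refine mul_mem ?_ (ihL gL rfl)
      obtain ⟨ti, tj, tij, tc⟩ := t
      exact hT ti tj tij tc gt rfl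
  rw [eq_top_iff]
  intro g _
  obtain ⟨L, L', D, hD⟩ :=
    Pivot.exists_list_transvec_mul_diagonal_mul_list_transvec (g : Matrix n n F)
  have hdL : det (L.map TransvectionStruct.toMatrix).prod = 1 :=
    TransvectionStruct.det_toMatrix_prod L
  have hdL' : det (L'.map TransvectionStruct.toMatrix).prod = 1 :=
    TransvectionStruct.det_toMatrix_prod L'
  have hdetD : det (diagonal D) = 1 := by
    have hdetg := g.2
    rw [hD, det_mul, det_mul, hdL, hdL', one_mul, mul_one] at hdetg
    exact hdetg
  have hD0 : ∀ i, D i ≠ 0 := by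
    intro i hDi
    rw [det_diagonal] at hdetD
    exact one_ne_zero (hdetD.symm.trans (Finset.prod_eq_zero (Finset.mem_univ i) hDi))
  set gL : SpecialLinearGroup n F := ⟨_, hdL⟩
  set gD : SpecialLinearGroup n F := ⟨_, hdetD⟩
  set gL' : SpecialLinearGroup n F := ⟨_, hdL'⟩
  have : g = gL * gD * gL' := Subtype.ext (by rw [hD]; rfl)
  rw [this]
  exact mul_mem (mul_mem (hlist L gL rfl)
    (hdiag (Finset.univ.filter (D · ≠ 1)).card D hD0 le_rfl gD rfl)) (hlist L' gL' rfl)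

end AuxGeneral

lemma aux_sum_two_sq {F : Type*} [Field F] [Fintype F] (c : F) : ∃ a b : F, a ^ 2 + b ^ 2 = c := by
  classical
  by_cases hchar : ringChar F = 2
  · obtain ⟨a, ha⟩ := FiniteField.isSquare_of_char_two hchar c
    exact ⟨a, 0, by rw [ha]; ring⟩
  · have hodd : Fintype.card F % 2 = 1 := by
      have := FiniteField.odd_card_of_char_ne_two hchar
      omega
    have hcard : ∀ f : F → F, (∀ x y : F, f x = f y → x = y ∨ x = -y) →
        Fintype.card F ≤ 2 * (Finset.univ.image f).card := by
      intro f hf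
      have h := Finset.card_le_mul_card_image (f := f) Finset.univ 2 ?_
      · simpa using h
      · intro a ha
        obtain ⟨x0, _, hx0⟩ := Finset.mem_image.mp ha
        have hss : Finset.univ.filter (fun x => f x = a) ⊆ {x0, -x0} := by
          intro x hx
          simp only [Finset.mem_filter] at hx
          have := hf x x0 (hx.2.trans hx0.symm)
          simp only [Finset.mem_insert, Finset.mem_singleton]
          tauto
        calc (Finset.univ.filter (fun x => f x = a)).card ≤ ({x0, -x0} : Finset F).card :=
              Finset.card_le_card hss
          _ ≤ 2 := (Finset.card_insert_le _ _).trans (by simp)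
    have hsq : ∀ x y : F, x ^ 2 = y ^ 2 → x = y ∨ x = -y := by
      intro x y h
      have h0 : (x - y) * (x + y) = 0 := by linear_combination h
      rcases mul_eq_zero.mp h0 with h' | h'
      · exact Or.inl (sub_eq_zero.mp h')
      · exact Or.inr (eq_neg_of_add_eq_zero_left h')
    set A : Finset F := Finset.univ.image (fun x : F => x ^ 2) with hA
    set B : Finset F := Finset.univ.image (fun x : F => c - x ^ 2) with hB
    have h1 : Fintype.card F ≤ 2 * A.card := hcard _ hsq
    have h2 : Fintype.card F ≤ 2 * B.card := hcard (fun x => c - x ^ 2) (by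
      intro x y h
      exact hsq x y (by linear_combination -h))
    have hAB : (A ∩ B).Nonempty := by
      rw [← Finset.card_pos]
      have hcup : (A ∪ B).card ≤ Fintype.card F := by
        simpa using Finset.card_le_card (Finset.subset_univ (A ∪ B))
      have := Finset.card_union_add_card_inter A B
      omega
    obtain ⟨z, hz⟩ := hAB
    rw [Finset.mem_inter] at hz
    obtain ⟨a, _, haz⟩ := Finset.mem_image.mp hz.1
    obtain ⟨b, _, hbz⟩ := Finset.mem_image.mp hz.2
    exact ⟨a, b, by linear_combination haz - hbz⟩

section Bstuff

variable {F : Type*} [Field F] (l : ℕ)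

/-- sign function for the signed cyclic shift -/
def genS (F : Type*) [Field F] (l : ℕ) : Fin (l + 1) → F :=
  fun i => if (i : ℕ) = l then (-1 : F) ^ l else 1

lemma genS_mul_self (x : Fin (l + 1)) : genS F l x * genS F l x = 1 := by
  unfold genS
  split_ifs
  · rw [← pow_add, ← two_mul, pow_mul]; norm_num
  · rw [one_mul]

/-- the signed cyclic shift matrix -/
def genB (F : Type*) [Field F] (l : ℕ) : Matrix (Fin (l+1)) (Fin (l+1)) F :=
  of fun i j => if i = j + 1 then genS F l j else 0

/-- inverse of the signed cyclic shift matrix -/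
def genBinv (F : Type*) [Field F] (l : ℕ) : Matrix (Fin (l+1)) (Fin (l+1)) F :=
  of fun i j => if j = i + 1 then genS F l i else 0

lemma genB_mul_apply (M : Matrix (Fin (l+1)) (Fin (l+1)) F) (a b : Fin (l+1)) :
    (genB F l * M) a b = genS F l (a - 1) * M (a - 1) b := by
  rw [mul_apply]
  rw [Finset.sum_eq_single (a - 1)]
  · simp [genB, sub_add_cancel]
  · intro k _ hk
    have : a ≠ k + 1 := by
      intro h; apply hk; rw [h, add_sub_cancel_right]
    simp [genB, this]
  · simp

lemma mul_genBinv_apply (M : Matrix (Fin (l+1)) (Fin (l+1)) F) (a b : Fin (l+1)) :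
    (M * genBinv F l) a b = M a (b - 1) * genS F l (b - 1) := by
  rw [mul_apply]
  rw [Finset.sum_eq_single (b - 1)]
  · simp [genBinv, sub_add_cancel]
  · intro k _ hk
    have : b ≠ k + 1 := by
      intro h; apply hk; rw [h, add_sub_cancel_right]
    simp [genBinv, this]
  · simp

lemma genB_mul_genBinv : genB F l * genBinv F l = 1 := by
  ext a b
  rw [genB_mul_apply]
  simp only [genBinv, of_apply, sub_add_cancel, one_apply]
  by_cases hab : b = a
  · subst hab
    simp [genS_mul_self]
  · simp [hab, Ne.symm hab]

lemma genB_conj (i j : Fin (l+1)) (c : F) :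
    genB F l * transvection i j c * genBinv F l =
      transvection (i+1) (j+1) (genS F l i * c * genS F l j) := by
  ext x y
  rw [mul_genBinv_apply, genB_mul_apply, aux_transvection_apply, aux_transvection_apply]
  have e1 : (x - 1 = y - 1) ↔ (x = y) := sub_left_inj
  have e2 : (i = x - 1) ↔ (i + 1 = x) := eq_sub_iff_add_eq
  have e3 : (j = y - 1) ↔ (j + 1 = y) := eq_sub_iff_add_eq
  simp only [e1, e2, e3]
  split_ifs with h1 h2 h2
  · obtain ⟨hx, hy⟩ := h2
    subst hx; subst hy
    have hij : i = j := by
      have := h1; simpa using this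
    subst hij
    simp only [add_sub_cancel_right]
    have := genS_mul_self l (F := F) i
    linear_combination this
  · have := genS_mul_self l (F := F) (x - 1)
    subst h1
    linear_combination this
  · obtain ⟨hx, hy⟩ := h2
    subst hx; subst hy
    simp only [add_sub_cancel_right]
    ring
  · ring

lemma genB_entry {F : Type*} [Field F] (l : ℕ) (i j : Fin (l + 1)) :
    (if (i : ℕ) = 0 ∧ (j : ℕ) = l then (-1 : F) ^ l
      else if (i : ℕ) = (j : ℕ) + 1 then 1 else 0) = genB F l i j := by
  show _ = if i = j + 1 then genS F l j else 0
  unfold genS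
  by_cases hj : (j : ℕ) = l
  · have hlast : j = Fin.last l := by simpa [Fin.ext_iff] using hj
    have hj1 : j + 1 = 0 := by rw [hlast]; exact Fin.last_add_one l
    have h2 : ¬ ((i : ℕ) = (j : ℕ) + 1) := by
      have := i.isLt; omega
    rw [hj1]
    by_cases hi : i = 0
    · have hi' : (i : ℕ) = 0 := by simp [hi]
      simp [hi, hi', hj]
    · have hi' : ¬ ((i : ℕ) = 0) := fun h => hi (Fin.ext (by simp [h]))
      simp [hi, hi', h2]
  · have hjne : j ≠ Fin.last l := by simpa [Fin.ext_iff] using hj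
    have hval : ((j + 1 : Fin (l + 1)) : ℕ) = (j : ℕ) + 1 := by
      rw [Fin.val_add_one]
      simp [hjne]
    have hiff : (i = j + 1) ↔ ((i : ℕ) = (j : ℕ) + 1) := by
      rw [Fin.ext_iff, hval]
    simp only [hj, and_false, if_false, hiff]

end Bstuff

/-- The matrices `A = T_{1,2}(1)`, `B` (signed cyclic shift, with `(1, l+1)` entry
`(-1)^l`, subdiagonal entries `1` and zeros elsewhere) and
`C = diag(λ⁻¹, λ, 1, …, 1)`, where `λ` generates the multiplicative group of the
finite field `F = GF(q)`, generate `SL(l+1, q)`. -/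
theorem stmt_14 {F : Type*} [Field F] [Fintype F] (l : ℕ) (hl : 1 ≤ l)
    (lam : Fˣ) (hlam : ∀ x : Fˣ, x ∈ Subgroup.zpowers lam)
    (A B C : Matrix.SpecialLinearGroup (Fin (l + 1)) F)
    (hA : (A : Matrix (Fin (l + 1)) (Fin (l + 1)) F) = 1 + Matrix.single 0 1 1)
    (hB : ∀ i j : Fin (l + 1),
      (B : Matrix (Fin (l + 1)) (Fin (l + 1)) F) i j =
        if (i : ℕ) = 0 ∧ (j : ℕ) = l then (-1 : F) ^ l
        else if (i : ℕ) = (j : ℕ) + 1 then 1 else 0)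
    (hC : (C : Matrix (Fin (l + 1)) (Fin (l + 1)) F) =
      Matrix.diagonal fun i : Fin (l + 1) =>
        if (i : ℕ) = 0 then ((lam⁻¹ : Fˣ) : F) else if (i : ℕ) = 1 then (lam : F) else 1) :
    Subgroup.closure {A, B, C} = ⊤ := by
  classical
  set H : Subgroup (Matrix.SpecialLinearGroup (Fin (l + 1)) F) := Subgroup.closure {A, B, C}
    with hH
  have hAmem : A ∈ H := Subgroup.subset_closure (by simp)
  have hBmem : B ∈ H := Subgroup.subset_closure (by simp)
  have hCmem : C ∈ H := Subgroup.subset_closure (by simp)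
  have h01 : (0 : Fin (l + 1)) ≠ 1 := by
    have : ((1 : Fin (l + 1)) : ℕ) = 1 := by
      rw [Fin.val_one', Nat.mod_eq_of_lt (by omega : 1 < l + 1)]
    intro h
    have h2 := congrArg Fin.val h
    rw [this, Fin.val_zero] at h2
    omega
  have coe_mul' : ∀ g h : Matrix.SpecialLinearGroup (Fin (l + 1)) F,
      ((g * h : Matrix.SpecialLinearGroup (Fin (l + 1)) F) :
        Matrix (Fin (l + 1)) (Fin (l + 1)) F) = (g : Matrix (Fin (l + 1)) (Fin (l + 1)) F) * h :=
    fun _ _ => rfl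
  -- coercion of B
  have hBcoe : (B : Matrix (Fin (l + 1)) (Fin (l + 1)) F) = genB F l := by
    ext i j
    rw [hB]
    exact genB_entry l i j
  have hBinvcoe : ((B⁻¹ : Matrix.SpecialLinearGroup (Fin (l + 1)) F) :
      Matrix (Fin (l + 1)) (Fin (l + 1)) F) = genBinv F l := by
    have h1 : ((B⁻¹ : Matrix.SpecialLinearGroup (Fin (l + 1)) F) :
        Matrix (Fin (l + 1)) (Fin (l + 1)) F) * (B : Matrix (Fin (l + 1)) (Fin (l + 1)) F)
        = 1 := by
      rw [← coe_mul', inv_mul_cancel]; rfl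
    calc ((B⁻¹ : Matrix.SpecialLinearGroup (Fin (l + 1)) F) :
          Matrix (Fin (l + 1)) (Fin (l + 1)) F)
        = ((B⁻¹ : Matrix.SpecialLinearGroup (Fin (l + 1)) F) :
          Matrix (Fin (l + 1)) (Fin (l + 1)) F) *
          ((B : Matrix (Fin (l + 1)) (Fin (l + 1)) F) * genBinv F l) := by
          rw [hBcoe, genB_mul_genBinv, Matrix.mul_one]
      _ = genBinv F l := by rw [← Matrix.mul_assoc, h1, Matrix.one_mul]
  have hBinvB : genBinv F l * genB F l = 1 := mul_eq_one_comm.mp (genB_mul_genBinv l)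
  -- coercion of C⁻¹
  set dC : Fin (l + 1) → F := fun i =>
    if (i : ℕ) = 0 then ((lam⁻¹ : Fˣ) : F) else if (i : ℕ) = 1 then (lam : F) else 1 with hdC
  set dC' : Fin (l + 1) → F := fun i =>
    if (i : ℕ) = 0 then (lam : F) else if (i : ℕ) = 1 then ((lam⁻¹ : Fˣ) : F) else 1 with hdC'
  have hCC' : ∀ k, dC k * dC' k = 1 := by
    intro k
    simp only [hdC, hdC']
    split_ifs <;> simp
  have hC'C : ∀ k, dC' k * dC k = 1 := by
    intro k
    simp only [hdC, hdC']
    split_ifs <;> simp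
  have hCinvcoe : ((C⁻¹ : Matrix.SpecialLinearGroup (Fin (l + 1)) F) :
      Matrix (Fin (l + 1)) (Fin (l + 1)) F) = Matrix.diagonal dC' := by
    have hCd : (C : Matrix (Fin (l + 1)) (Fin (l + 1)) F) * Matrix.diagonal dC' = 1 := by
      rw [hC, Matrix.diagonal_mul_diagonal, ← Matrix.diagonal_one]
      exact congrArg Matrix.diagonal (funext hCC')
    have h1 : ((C⁻¹ : Matrix.SpecialLinearGroup (Fin (l + 1)) F) :
        Matrix (Fin (l + 1)) (Fin (l + 1)) F) * (C : Matrix (Fin (l + 1)) (Fin (l + 1)) F)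
        = 1 := by
      rw [← coe_mul', inv_mul_cancel]; rfl
    calc ((C⁻¹ : Matrix.SpecialLinearGroup (Fin (l + 1)) F) :
          Matrix (Fin (l + 1)) (Fin (l + 1)) F)
        = ((C⁻¹ : Matrix.SpecialLinearGroup (Fin (l + 1)) F) :
          Matrix (Fin (l + 1)) (Fin (l + 1)) F) *
          ((C : Matrix (Fin (l + 1)) (Fin (l + 1)) F) * Matrix.diagonal dC') := by
          rw [hCd, Matrix.mul_one]
      _ = Matrix.diagonal dC' := by rw [← Matrix.mul_assoc, h1, Matrix.one_mul]
  -- diagonal conjugation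
  have hdconj : ∀ (d e : Fin (l + 1) → F), (∀ k, d k * e k = 1) →
      ∀ (i j : Fin (l + 1)) (c : F),
      Matrix.diagonal d * Matrix.transvection i j c * Matrix.diagonal e =
        Matrix.transvection i j (d i * c * e j) := by
    intro d e hde i j c
    ext x y
    rw [Matrix.mul_diagonal, Matrix.diagonal_mul, aux_transvection_apply, aux_transvection_apply]
    split_ifs with h1 h2 h2
    · obtain ⟨hx, hy⟩ := h2
      subst hx; subst hy
      subst h1
      linear_combination hde i
    · subst h1
      linear_combination hde x
    · obtain ⟨hx, hy⟩ := h2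
      subst hx; subst hy
      ring
    · ring
  -- the transvection membership predicate
  set P : Fin (l + 1) → Fin (l + 1) → Prop := fun i j =>
    ∀ (c : F) (g : Matrix.SpecialLinearGroup (Fin (l + 1)) F),
      (g : Matrix (Fin (l + 1)) (Fin (l + 1)) F) = Matrix.transvection i j c → g ∈ H with hP
  -- conjugation by B moves transvections cyclically
  have hBP : ∀ i j : Fin (l + 1), P i j → P (i + 1) (j + 1) := by
    intro i j hPij c g hg
    set c'' : F := genS F l i * c * genS F l j with hc''
    have hback : genS F l i * c'' * genS F l j = c := by
      rw [hc'']
      have h1 := genS_mul_self l (F := F) i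
      have h2 := genS_mul_self l (F := F) j
      linear_combination (c * genS F l j * genS F l j) * h1 + c * h2
    have hconj : genB F l * Matrix.transvection i j c'' * genBinv F l =
        Matrix.transvection (i + 1) (j + 1) c := by
      rw [genB_conj, hback]
    have hcoe : ((B⁻¹ * g * B : Matrix.SpecialLinearGroup (Fin (l + 1)) F) :
        Matrix (Fin (l + 1)) (Fin (l + 1)) F) = Matrix.transvection i j c'' := by
      show ((B⁻¹ : Matrix.SpecialLinearGroup (Fin (l + 1)) F) :
        Matrix (Fin (l + 1)) (Fin (l + 1)) F) * g * B = _
      rw [hBinvcoe, hg, hBcoe, ← hconj]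
      calc genBinv F l * (genB F l * Matrix.transvection i j c'' * genBinv F l) * genB F l
          = (genBinv F l * genB F l) * Matrix.transvection i j c'' *
            (genBinv F l * genB F l) := by
            simp only [Matrix.mul_assoc]
        _ = Matrix.transvection i j c'' := by rw [hBinvB]; simp
    have hmem := hPij c'' (B⁻¹ * g * B) hcoe
    have : g = B * (B⁻¹ * g * B) * B⁻¹ := by group
    rw [this]
    exact mul_mem (mul_mem hBmem hmem) (inv_mem hBmem)
  -- step 1: all transvections at position (0,1)
  have hv1 : ((1 : Fin (l + 1)) : ℕ) = 1 := by
    rw [Fin.val_one', Nat.mod_eq_of_lt (by omega : 1 < l + 1)]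
  have hAT : (A : Matrix (Fin (l + 1)) (Fin (l + 1)) F) = Matrix.transvection 0 1 1 := hA
  have huv : (lam : F) * ((lam⁻¹ : Fˣ) : F) = 1 := Units.mul_inv lam
  have hvu : ((lam⁻¹ : Fˣ) : F) * (lam : F) = 1 := Units.inv_mul lam
  set S : AddSubgroup F :=
    { carrier := {c : F | ∀ g : Matrix.SpecialLinearGroup (Fin (l + 1)) F,
        (g : Matrix (Fin (l + 1)) (Fin (l + 1)) F) = Matrix.transvection 0 1 c → g ∈ H}
      zero_mem' := by
        intro g hg
        have : g = 1 := Subtype.ext (by rw [hg, Matrix.transvection_zero]; rfl)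
        rw [this]; exact one_mem H
      add_mem' := by
        intro a b ha hb g hg
        have da : Matrix.det (Matrix.transvection (0 : Fin (l + 1)) 1 a) = 1 :=
          Matrix.det_transvection_of_ne _ _ h01 _
        have db : Matrix.det (Matrix.transvection (0 : Fin (l + 1)) 1 b) = 1 :=
          Matrix.det_transvection_of_ne _ _ h01 _
        set ga : Matrix.SpecialLinearGroup (Fin (l + 1)) F := ⟨_, da⟩
        set gb : Matrix.SpecialLinearGroup (Fin (l + 1)) F := ⟨_, db⟩
        have : g = ga * gb := by
          apply Subtype.ext
          rw [hg]
          show _ = Matrix.transvection 0 1 a * Matrix.transvection 0 1 b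
          rw [Matrix.transvection_mul_transvection_same _ _ h01]
        rw [this]
        exact mul_mem (ha ga rfl) (hb gb rfl)
      neg_mem' := by
        intro a ha g hg
        have da : Matrix.det (Matrix.transvection (0 : Fin (l + 1)) 1 a) = 1 :=
          Matrix.det_transvection_of_ne _ _ h01 _
        set ga : Matrix.SpecialLinearGroup (Fin (l + 1)) F := ⟨_, da⟩
        have hmul : g * ga = 1 := by
          apply Subtype.ext
          show (g : Matrix (Fin (l + 1)) (Fin (l + 1)) F) * ga = _
          rw [hg]
          show Matrix.transvection 0 1 (-a) * Matrix.transvection 0 1 a = _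
          rw [Matrix.transvection_mul_transvection_same _ _ h01, neg_add_cancel,
            Matrix.transvection_zero]
          rfl
        have : g = ga⁻¹ := by
          rw [← mul_one g, ← mul_inv_cancel ga, ← mul_assoc, hmul, one_mul]
        rw [this]
        exact inv_mem (ha ga rfl) } with hS
  have hSmem : ∀ c : F, c ∈ S →
      ∀ g : Matrix.SpecialLinearGroup (Fin (l + 1)) F,
        (g : Matrix (Fin (l + 1)) (Fin (l + 1)) F) = Matrix.transvection 0 1 c → g ∈ H :=
    fun c hc => hc
  have hSmem' : ∀ c : F,
      (∀ g : Matrix.SpecialLinearGroup (Fin (l + 1)) F,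
        (g : Matrix (Fin (l + 1)) (Fin (l + 1)) F) = Matrix.transvection 0 1 c → g ∈ H) →
      c ∈ S := fun c hc => hc
  have hone : (1 : F) ∈ S := by
    apply hSmem'
    intro g hg
    have : g = A := Subtype.ext (hg.trans hAT.symm)
    rw [this]; exact hAmem
  have hd0' : dC' 0 = (lam : F) := by simp [hdC']
  have hd1 : dC 1 = (lam : F) := by
    simp only [hdC]
    rw [hv1]
    norm_num
  have hd0 : dC 0 = ((lam⁻¹ : Fˣ) : F) := by simp [hdC]
  have hd1' : dC' 1 = ((lam⁻¹ : Fˣ) : F) := by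
    simp only [hdC']
    rw [hv1]
    norm_num
  -- multiplying by lam⁻¹ * lam⁻¹ stays in S
  have hCstep : ∀ c : F, c ∈ S → ((lam⁻¹ : Fˣ) : F) * ((lam⁻¹ : Fˣ) : F) * c ∈ S := by
    intro c hc
    apply hSmem'
    intro g hg
    have hval1 : dC' 0 * (((lam⁻¹ : Fˣ) : F) * ((lam⁻¹ : Fˣ) : F) * c) * dC 1 = c := by
      rw [hd0', hd1]
      linear_combination ((lam⁻¹ : Fˣ) : F) * (lam : F) * c * huv + c * hvu
    have hcoe' : ((C⁻¹ * g * C : Matrix.SpecialLinearGroup (Fin (l + 1)) F) :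
        Matrix (Fin (l + 1)) (Fin (l + 1)) F) = Matrix.transvection 0 1 c := by
      show ((C⁻¹ : Matrix.SpecialLinearGroup (Fin (l + 1)) F) :
        Matrix (Fin (l + 1)) (Fin (l + 1)) F) * g * C = _
      rw [hCinvcoe, hg, hC, hdconj dC' dC hC'C, hval1]
    have hmem := hSmem c hc _ hcoe'
    have : g = C * (C⁻¹ * g * C) * C⁻¹ := by group
    rw [this]
    exact mul_mem (mul_mem hCmem hmem) (inv_mem hCmem)
  -- multiplying by lam * lam stays in S
  have hCstep' : ∀ c : F, c ∈ S → (lam : F) * (lam : F) * c ∈ S := by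
    intro c hc
    apply hSmem'
    intro g hg
    have hval1 : dC 0 * ((lam : F) * (lam : F) * c) * dC' 1 = c := by
      rw [hd0, hd1']
      linear_combination (lam : F) * ((lam⁻¹ : Fˣ) : F) * c * hvu + c * huv
    have hcoe' : ((C * g * C⁻¹ : Matrix.SpecialLinearGroup (Fin (l + 1)) F) :
        Matrix (Fin (l + 1)) (Fin (l + 1)) F) = Matrix.transvection 0 1 c := by
      show (C : Matrix (Fin (l + 1)) (Fin (l + 1)) F) * g * (C⁻¹ :
        Matrix.SpecialLinearGroup (Fin (l + 1)) F) = _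
      rw [hCinvcoe, hg, hC, hdconj dC dC' hCC', hval1]
    have hmem := hSmem c hc _ hcoe'
    have : g = C⁻¹ * (C * g * C⁻¹) * C := by group
    rw [this]
    exact mul_mem (mul_mem (inv_mem hCmem) hmem) hCmem
  -- all powers (lam²)^k are in S
  have hz : ∀ k : ℤ, (((lam ^ 2) ^ k : Fˣ) : F) ∈ S := by
    intro k
    induction k using Int.induction_on with
    | zero => simpa using hone
    | succ i hi =>
      have e : ((lam ^ 2) ^ ((i : ℤ) + 1) : Fˣ) = (lam ^ 2) ^ (i : ℤ) * lam ^ 2 :=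
        zpow_add_one _ _
      rw [e, Units.val_mul]
      have e2 : ((lam ^ 2 : Fˣ) : F) = (lam : F) * (lam : F) := by
        rw [pow_two, Units.val_mul]
      rw [e2, ← mul_assoc]
      have := hCstep' _ hi
      rw [show (lam : F) * (lam : F) * (((lam ^ 2) ^ (i : ℤ) : Fˣ) : F)
        = (((lam ^ 2) ^ (i : ℤ) : Fˣ) : F) * (lam : F) * (lam : F) by ring] at this
      exact this
    | pred i hi =>
      have e : ((lam ^ 2) ^ (-(i : ℤ) - 1) : Fˣ) = (lam ^ 2) ^ (-(i : ℤ)) * (lam ^ 2)⁻¹ :=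
        zpow_sub_one _ _
      rw [e, Units.val_mul]
      have e2 : (((lam ^ 2)⁻¹ : Fˣ) : F) = ((lam⁻¹ : Fˣ) : F) * ((lam⁻¹ : Fˣ) : F) := by
        rw [show (lam ^ 2)⁻¹ = lam⁻¹ * lam⁻¹ by rw [pow_two, _root_.mul_inv_rev], Units.val_mul]
      rw [e2, ← mul_assoc]
      have := hCstep _ hi
      rw [show ((lam⁻¹ : Fˣ) : F) * ((lam⁻¹ : Fˣ) : F) * (((lam ^ 2) ^ (-(i : ℤ)) : Fˣ) : F)
        = (((lam ^ 2) ^ (-(i : ℤ)) : Fˣ) : F) * ((lam⁻¹ : Fˣ) : F) * ((lam⁻¹ : Fˣ) : F)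
        by ring] at this
      exact this
  -- all squares are in S
  have hsqmem : ∀ a : F, a ^ 2 ∈ S := by
    intro a
    rcases eq_or_ne a 0 with rfl | ha
    · simpa using S.zero_mem
    · obtain ⟨k, hk⟩ := Subgroup.mem_zpowers_iff.mp (hlam (Units.mk0 a ha))
      have hak : a = ((lam ^ k : Fˣ) : F) := by rw [hk]; rfl
      have e1 : (lam ^ k) ^ (2 : ℕ) = (lam ^ (2 : ℕ)) ^ k := by
        rw [← _root_.zpow_natCast (lam ^ k) 2, ← _root_.zpow_mul, mul_comm, _root_.zpow_mul, _root_.zpow_natCast]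
      have : a ^ 2 = (((lam ^ 2) ^ k : Fˣ) : F) := by
        rw [hak, ← Units.val_pow_eq_pow_val, e1]
      rw [this]
      exact hz k
  have hallS : ∀ c : F, c ∈ S := by
    intro c
    obtain ⟨a, b, hab⟩ := aux_sum_two_sq c
    rw [← hab]
    exact S.add_mem (hsqmem a) (hsqmem b)
  have hP01 : P 0 1 := fun c => hSmem c (hallS c)
  -- step 2: spread along the diagonal
  have hPadj : ∀ m : ℕ, P ((m : ℕ) : Fin (l + 1)) (((m : ℕ) : Fin (l + 1)) + 1) := by
    intro m
    induction m with
    | zero => simpa using hP01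
    | succ m ih =>
      have hcast : (((m + 1 : ℕ)) : Fin (l + 1)) = ((m : ℕ) : Fin (l + 1)) + 1 := by
        push_cast; ring
      rw [hcast]
      exact hBP _ _ ih
  have hadj : ∀ i : Fin (l + 1), P i (i + 1) := by
    intro i
    have := hPadj i.val
    rwa [Fin.cast_val_eq_self] at this
  -- step 3: all transvections by induction on the distance
  have hPd : ∀ (m : ℕ) (i : Fin (l + 1)), i + ((m : ℕ) : Fin (l + 1)) ≠ i →
      P i (i + ((m : ℕ) : Fin (l + 1))) := by
    intro m
    induction m with
    | zero => intro i hi; simp at hi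
    | succ m ih =>
      intro i hi
      have hcast : (((m + 1 : ℕ)) : Fin (l + 1)) = ((m : ℕ) : Fin (l + 1)) + 1 := by
        push_cast; ring
      by_cases hm0 : ((m : ℕ) : Fin (l + 1)) = 0
      · have := hadj i
        rw [hcast, hm0, zero_add]
        exact this
      · set k : Fin (l + 1) := i + ((m : ℕ) : Fin (l + 1)) with hk
        have hki : k ≠ i := by
          rw [hk]
          intro h
          exact hm0 (by simpa using h)
        have hik : i ≠ k := hki.symm
        have hjeq : i + (((m + 1 : ℕ)) : Fin (l + 1)) = k + 1 := by
          rw [hcast, hk, add_assoc]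
        have h1ne0 : (1 : Fin (l + 1)) ≠ 0 := fun h => h01 h.symm
        have hkj : k ≠ k + 1 := by
          intro h
          exact h1ne0 (by simpa using h.symm)
        have hij : i ≠ k + 1 := by
          rw [← hjeq]
          exact (Ne.symm hi)
        intro c g hg
        rw [hjeq] at hg
        have dik : Matrix.det (Matrix.transvection i k c) = 1 :=
          Matrix.det_transvection_of_ne _ _ hik _
        have dkj : Matrix.det (Matrix.transvection k (k + 1) (1 : F)) = 1 :=
          Matrix.det_transvection_of_ne _ _ hkj _
        have dik' : Matrix.det (Matrix.transvection i k (-c)) = 1 :=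
          Matrix.det_transvection_of_ne _ _ hik _
        have dkj' : Matrix.det (Matrix.transvection k (k + 1) (-1 : F)) = 1 :=
          Matrix.det_transvection_of_ne _ _ hkj _
        set g1 : Matrix.SpecialLinearGroup (Fin (l + 1)) F := ⟨_, dik⟩
        set g2 : Matrix.SpecialLinearGroup (Fin (l + 1)) F := ⟨_, dkj⟩
        set g3 : Matrix.SpecialLinearGroup (Fin (l + 1)) F := ⟨_, dik'⟩
        set g4 : Matrix.SpecialLinearGroup (Fin (l + 1)) F := ⟨_, dkj'⟩
        have hgfac : g = g1 * (g2 * (g3 * g4)) := by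
          apply Subtype.ext
          rw [hg]
          show _ = Matrix.transvection i k c * (Matrix.transvection k (k + 1) 1 *
            (Matrix.transvection i k (-c) * Matrix.transvection k (k + 1) (-1)))
          rw [aux_comm_transvection i k (k + 1) hik hkj hij c]
        rw [hgfac]
        have hki' : i + ((m : ℕ) : Fin (l + 1)) ≠ i := by rw [← hk]; exact hki
        have hm1 : g1 ∈ H := ih i hki' c g1 (by rw [← hk])
        have hm3 : g3 ∈ H := ih i hki' (-c) g3 (by rw [← hk])
        have hm2 : g2 ∈ H := hadj k 1 g2 rfl
        have hm4 : g4 ∈ H := hadj k (-1) g4 rfl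
        exact mul_mem hm1 (mul_mem hm2 (mul_mem hm3 hm4))
  -- final: all transvections are in H
  have hT : ∀ (i j : Fin (l + 1)), i ≠ j → ∀ (c : F)
      (g : Matrix.SpecialLinearGroup (Fin (l + 1)) F),
      (g : Matrix (Fin (l + 1)) (Fin (l + 1)) F) = Matrix.transvection i j c → g ∈ H := by
    intro i j hij c g hg
    have hmi : i + (((j - i : Fin (l + 1)).val : ℕ) : Fin (l + 1)) = j := by
      rw [Fin.cast_val_eq_self]
      exact add_sub_cancel i j
    have hne : i + (((j - i : Fin (l + 1)).val : ℕ) : Fin (l + 1)) ≠ i := by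
      rw [hmi]; exact hij.symm
    have := hPd ((j - i : Fin (l + 1)).val) i hne
    rw [hmi] at this
    exact this c g hg
  exact aux_eq_top_of_transvections_mem H hT
end

section
/- Let G = SL(l+1,q) with l ≥ 5, let A = T_{1,2}(1), B the signed cyclic-shift matrix, C = diag(λ^{-1}, λ, 1,...,1) with λ a generator of GF(q)^*, and let S = ⋃_{i=0}^{l-1} S_0 B^i where S_0 = {block diag(D,1) : D ∈ SL(l,q)}. Then in the Cayley graph Cay(G, {A^{±1}, B^{±1}, C^{±1}}), the boundary ∂S is contained in the union of the 6 right cosets S_0 B^l, S_0 B^{-1}, S_0 B^{l-1}A, S_0 B^{l-1}A^{-1}, S_0 B^{l-1}C, S_0 B^{l-1}C^{-1}, so |∂S|/|S| ≤ 6/l. -/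
open Matrix
open scoped Pointwise

section SL18

variable {F : Type*} [Field F] {l : ℕ}

/-- last column and last row of `M` are those of the identity -/
def sl18P (M : Matrix (Fin (l + 1)) (Fin (l + 1)) F) : Prop :=
  (∀ a, M a (Fin.last l) = if a = Fin.last l then 1 else 0) ∧
  (∀ b, M (Fin.last l) b = if b = Fin.last l then 1 else 0)

/-- `M` agrees with the identity outside the top-left `2 × 2` corner -/
def sl18Q (M : Matrix (Fin (l + 1)) (Fin (l + 1)) F) : Prop :=
  (∀ a c : Fin (l + 1), 2 ≤ (c : ℕ) → M a c = if a = c then 1 else 0) ∧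
  (∀ c b : Fin (l + 1), 2 ≤ (c : ℕ) → M c b = if b = c then 1 else 0)

lemma sl18Q_P {M : Matrix (Fin (l + 1)) (Fin (l + 1)) F} (hl : 2 ≤ l) (h : sl18Q M) :
    sl18P M :=
  ⟨fun a => h.1 a _ (by simp [Fin.val_last]; omega),
   fun b => h.2 _ b (by simp [Fin.val_last]; omega)⟩

lemma sl18P_one : sl18P (1 : Matrix (Fin (l + 1)) (Fin (l + 1)) F) := by
  constructor <;> intro a <;> simp [Matrix.one_apply, eq_comm]

lemma sl18P_mul {M N : Matrix (Fin (l + 1)) (Fin (l + 1)) F}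
    (hM : sl18P M) (hN : sl18P N) : sl18P (M * N) := by
  constructor
  · intro a
    simp only [Matrix.mul_apply, hN.1, mul_ite, mul_one, mul_zero, Finset.sum_ite_eq',
      Finset.mem_univ, if_true]
    exact hM.1 a
  · intro b
    simp only [Matrix.mul_apply, hM.2, ite_mul, one_mul, zero_mul, Finset.sum_ite_eq',
      Finset.mem_univ, if_true]
    exact hN.2 b

lemma sl18P_inv (g : Matrix.SpecialLinearGroup (Fin (l + 1)) F)
    (h : sl18P (g : Matrix (Fin (l + 1)) (Fin (l + 1)) F)) :
    sl18P ((g⁻¹ : Matrix.SpecialLinearGroup (Fin (l + 1)) F) :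
      Matrix (Fin (l + 1)) (Fin (l + 1)) F) := by
  have h1 : ((g⁻¹ : Matrix.SpecialLinearGroup (Fin (l + 1)) F) :
      Matrix (Fin (l + 1)) (Fin (l + 1)) F) * g = 1 := by
    rw [← Matrix.SpecialLinearGroup.coe_mul, inv_mul_cancel,
      Matrix.SpecialLinearGroup.coe_one]
  have h2 : (g : Matrix (Fin (l + 1)) (Fin (l + 1)) F) *
      ((g⁻¹ : Matrix.SpecialLinearGroup (Fin (l + 1)) F) :
        Matrix (Fin (l + 1)) (Fin (l + 1)) F) = 1 := by
    rw [← Matrix.SpecialLinearGroup.coe_mul, mul_inv_cancel,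
      Matrix.SpecialLinearGroup.coe_one]
  constructor
  · intro a
    have key : (((g⁻¹ : Matrix.SpecialLinearGroup (Fin (l + 1)) F) :
        Matrix (Fin (l + 1)) (Fin (l + 1)) F) * g) a (Fin.last l) =
        ((g⁻¹ : Matrix.SpecialLinearGroup (Fin (l + 1)) F) :
          Matrix (Fin (l + 1)) (Fin (l + 1)) F) a (Fin.last l) := by
      simp only [Matrix.mul_apply, h.1, mul_ite, mul_one, mul_zero, Finset.sum_ite_eq',
        Finset.mem_univ, if_true]
    rw [← key, h1, Matrix.one_apply]
  · intro b
    have key : ((g : Matrix (Fin (l + 1)) (Fin (l + 1)) F) *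
        ((g⁻¹ : Matrix.SpecialLinearGroup (Fin (l + 1)) F) :
          Matrix (Fin (l + 1)) (Fin (l + 1)) F)) (Fin.last l) b =
        ((g⁻¹ : Matrix.SpecialLinearGroup (Fin (l + 1)) F) :
          Matrix (Fin (l + 1)) (Fin (l + 1)) F) (Fin.last l) b := by
      simp only [Matrix.mul_apply, h.2, ite_mul, one_mul, zero_mul, Finset.sum_ite_eq',
        Finset.mem_univ, if_true]
    rw [← key, h2, Matrix.one_apply]
    by_cases hb : b = Fin.last l <;> simp [hb, eq_comm]

lemma sl18_rowB (B : Matrix.SpecialLinearGroup (Fin (l + 1)) F)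
    (hB : ∀ i j : Fin (l + 1),
      (B : Matrix (Fin (l + 1)) (Fin (l + 1)) F) i j =
        if (i : ℕ) = 0 ∧ (j : ℕ) = l then (-1 : F) ^ l
        else if (i : ℕ) = (j : ℕ) + 1 then 1 else 0) :
    ∀ i, i ≤ l → ∀ b : Fin (l + 1),
      ((B ^ i : Matrix.SpecialLinearGroup (Fin (l + 1)) F) :
        Matrix (Fin (l + 1)) (Fin (l + 1)) F) (Fin.last l) b =
      if (b : ℕ) = l - i then 1 else 0 := by
  intro i
  induction i with
  | zero =>
    intro _ b
    have hiff : (Fin.last l = b) ↔ ((b : ℕ) = l - 0) := by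
      rw [Fin.ext_iff]; simp [Fin.val_last, eq_comm]
    rw [pow_zero, Matrix.SpecialLinearGroup.coe_one, Matrix.one_apply, if_congr hiff rfl rfl]
  | succ i ih =>
    intro hi b
    have hcond : ∀ k : Fin (l + 1), ((k : ℕ) = l - i) ↔ k = (⟨l - i, by omega⟩ : Fin (l + 1)) := by
      intro k; rw [Fin.ext_iff]
    rw [pow_succ, Matrix.SpecialLinearGroup.coe_mul, Matrix.mul_apply]
    simp only [ih (by omega), hcond, ite_mul, one_mul, zero_mul, Finset.sum_ite_eq',
      Finset.mem_univ, if_true]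
    rw [hB]
    have h1 : ¬(((⟨l - i, by omega⟩ : Fin (l + 1)) : ℕ) = 0 ∧ (b : ℕ) = l) := by
      simp only [not_and]; intro h; omega
    rw [if_neg h1]
    have h2 : (((⟨l - i, by omega⟩ : Fin (l + 1)) : ℕ) = (b : ℕ) + 1) ↔ ((b : ℕ) = l - (i + 1)) := by
      simp only []; omega
    rw [if_congr h2 rfl rfl]

lemma sl18_colB (B : Matrix.SpecialLinearGroup (Fin (l + 1)) F)
    (hB : ∀ i j : Fin (l + 1),
      (B : Matrix (Fin (l + 1)) (Fin (l + 1)) F) i j =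
        if (i : ℕ) = 0 ∧ (j : ℕ) = l then (-1 : F) ^ l
        else if (i : ℕ) = (j : ℕ) + 1 then 1 else 0) :
    ∀ i, i ≤ l → ∀ a : Fin (l + 1),
      ((B ^ i : Matrix.SpecialLinearGroup (Fin (l + 1)) F) :
        Matrix (Fin (l + 1)) (Fin (l + 1)) F) a (⟨l - i, by omega⟩ : Fin (l + 1)) =
      if a = Fin.last l then 1 else 0 := by
  intro i
  induction i with
  | zero =>
    intro _ a
    have hiff : (a = (⟨l - 0, by omega⟩ : Fin (l + 1))) ↔ (a = Fin.last l) := by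
      rw [Fin.ext_iff, Fin.ext_iff]; simp [Fin.val_last]
    rw [pow_zero, Matrix.SpecialLinearGroup.coe_one, Matrix.one_apply, if_congr hiff rfl rfl]
  | succ i ih =>
    intro hi a
    have hBcol : ∀ k : Fin (l + 1),
        (B : Matrix (Fin (l + 1)) (Fin (l + 1)) F) k (⟨l - (i + 1), by omega⟩ : Fin (l + 1)) =
        if k = (⟨l - i, by omega⟩ : Fin (l + 1)) then 1 else 0 := by
      intro k
      rw [hB]
      have h1 : ¬(((k : ℕ) = 0) ∧ (((⟨l - (i + 1), by omega⟩ : Fin (l + 1)) : ℕ) = l)) := by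
        simp only [not_and]; intro h; omega
      rw [if_neg h1]
      have h2 : ((k : ℕ) = ((⟨l - (i + 1), by omega⟩ : Fin (l + 1)) : ℕ) + 1) ↔
          (k = (⟨l - i, by omega⟩ : Fin (l + 1))) := by
        rw [Fin.ext_iff]; simp only []; omega
      rw [if_congr h2 rfl rfl]
    rw [pow_succ, Matrix.SpecialLinearGroup.coe_mul, Matrix.mul_apply]
    simp only [hBcol, mul_ite, mul_one, mul_zero, Finset.sum_ite_eq', Finset.mem_univ, if_true]
    exact ih (by omega) a

end SL18

set_option maxHeartbeats 2000000 in
/-- For `G = SL(l+1, q)` with `l ≥ 5`, `A = T_{1,2}(1)`, `B` the signed cyclic-shift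
matrix, `C = diag(λ⁻¹, λ, 1, …, 1)` with `λ` a generator of `GF(q)ˣ`, and
`S = ⋃_{i=0}^{l-1} S₀ B^i` with `S₀ = {block diag(D,1) : D ∈ SL(l,q)}`:
in `Cay(G, {A^{±1}, B^{±1}, C^{±1}})` the boundary `∂S` is contained in the union of
the six right cosets `S₀B^l, S₀B⁻¹, S₀B^{l-1}A, S₀B^{l-1}A⁻¹, S₀B^{l-1}C, S₀B^{l-1}C⁻¹`,
hence `|∂S| / |S| ≤ 6 / l`. -/
theorem stmt_18 {F : Type*} [Field F] [Fintype F] (l : ℕ) (hl : 5 ≤ l)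
    (lam : Fˣ) (hlam : ∀ x : Fˣ, x ∈ Subgroup.zpowers lam)
    (A B C : Matrix.SpecialLinearGroup (Fin (l + 1)) F)
    (hA : (A : Matrix (Fin (l + 1)) (Fin (l + 1)) F) = 1 + Matrix.single 0 1 1)
    (hB : ∀ i j : Fin (l + 1),
      (B : Matrix (Fin (l + 1)) (Fin (l + 1)) F) i j =
        if (i : ℕ) = 0 ∧ (j : ℕ) = l then (-1 : F) ^ l
        else if (i : ℕ) = (j : ℕ) + 1 then 1 else 0)
    (hC : (C : Matrix (Fin (l + 1)) (Fin (l + 1)) F) =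
      Matrix.diagonal fun i : Fin (l + 1) =>
        if (i : ℕ) = 0 then ((lam⁻¹ : Fˣ) : F) else if (i : ℕ) = 1 then (lam : F) else 1)
    (S0 : Set (Matrix.SpecialLinearGroup (Fin (l + 1)) F))
    (hS0 : S0 = {M : Matrix.SpecialLinearGroup (Fin (l + 1)) F |
      ∃ D : Matrix (Fin l) (Fin l) F, D.det = 1 ∧
      (M : Matrix (Fin (l + 1)) (Fin (l + 1)) F) =
        Matrix.reindex finSumFinEquiv finSumFinEquiv (Matrix.fromBlocks D 0 0 1)})
    (S : Set (Matrix.SpecialLinearGroup (Fin (l + 1)) F))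
    (hS : S = ⋃ i ∈ Finset.range l, S0 * {B ^ i})
    (T : Set (Matrix.SpecialLinearGroup (Fin (l + 1)) F))
    (hT : T = {A, A⁻¹, B, B⁻¹, C, C⁻¹}) :
    {x | x ∉ S ∧ ∃ s ∈ S, s⁻¹ * x ∈ T} ⊆
      S0 * {B ^ l} ∪ S0 * {B⁻¹} ∪ S0 * {B ^ (l - 1) * A} ∪ S0 * {B ^ (l - 1) * A⁻¹} ∪
        S0 * {B ^ (l - 1) * C} ∪ S0 * {B ^ (l - 1) * C⁻¹} ∧
    (({x | x ∉ S ∧ ∃ s ∈ S, s⁻¹ * x ∈ T}).ncard : ℝ) / S.ncard ≤ 6 / l := by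
  classical
  -- the membership characterisation of S0
  have hchar : ∀ g : Matrix.SpecialLinearGroup (Fin (l + 1)) F,
      g ∈ S0 ↔ sl18P (g : Matrix (Fin (l + 1)) (Fin (l + 1)) F) := by
    intro g
    have hlast : (finSumFinEquiv.symm (Fin.last l) : Fin l ⊕ Fin 1) = Sum.inr 0 := by
      rw [Equiv.symm_apply_eq, finSumFinEquiv_apply_right]
      ext; simp [Fin.val_last]
    have hlt : ∀ (a : Fin (l + 1)) (h : (a : ℕ) < l),
        (finSumFinEquiv.symm a : Fin l ⊕ Fin 1) = Sum.inl ⟨(a : ℕ), h⟩ := by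
      intro a h
      rw [Equiv.symm_apply_eq, finSumFinEquiv_apply_left]
      ext; simp [Fin.castAdd]
    rw [hS0]; simp only [Set.mem_setOf_eq]
    constructor
    · rintro ⟨D, hD, hg⟩
      constructor
      · intro a
        rw [hg, Matrix.reindex_apply, Matrix.submatrix_apply, hlast]
        by_cases ha : (a : ℕ) < l
        · rw [hlt a ha, Matrix.fromBlocks_apply₁₂, Matrix.zero_apply, if_neg]
          intro h; rw [Fin.ext_iff, Fin.val_last] at h; omega
        · have haa : a = Fin.last l := by rw [Fin.ext_iff, Fin.val_last]; have := a.isLt; omega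
          rw [haa, hlast, Matrix.fromBlocks_apply₂₂, if_pos rfl]
          simp [Matrix.one_apply]
      · intro b
        rw [hg, Matrix.reindex_apply, Matrix.submatrix_apply, hlast]
        by_cases hb : (b : ℕ) < l
        · rw [hlt b hb, Matrix.fromBlocks_apply₂₁, Matrix.zero_apply, if_neg]
          intro h; rw [Fin.ext_iff, Fin.val_last] at h; omega
        · have hbb : b = Fin.last l := by rw [Fin.ext_iff, Fin.val_last]; have := b.isLt; omega
          rw [hbb, hlast, Matrix.fromBlocks_apply₂₂, if_pos rfl]
          simp [Matrix.one_apply]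
    · intro hP
      set D : Matrix (Fin l) (Fin l) F :=
        fun u v => (g : Matrix (Fin (l + 1)) (Fin (l + 1)) F)
          ⟨(u : ℕ), by omega⟩ ⟨(v : ℕ), by omega⟩ with hDdef
      have heq : (g : Matrix (Fin (l + 1)) (Fin (l + 1)) F) =
          Matrix.reindex finSumFinEquiv finSumFinEquiv (Matrix.fromBlocks D 0 0 1) := by
        ext a b
        rw [Matrix.reindex_apply, Matrix.submatrix_apply]
        by_cases ha : (a : ℕ) < l
        · by_cases hb : (b : ℕ) < l
          · rw [hlt a ha, hlt b hb, Matrix.fromBlocks_apply₁₁]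
          · have hbb : b = Fin.last l := by
              rw [Fin.ext_iff, Fin.val_last]; have := b.isLt; omega
            rw [hbb, hlast, hlt a ha, Matrix.fromBlocks_apply₁₂, Matrix.zero_apply, hP.1, if_neg]
            intro h; rw [Fin.ext_iff, Fin.val_last] at h; omega
        · have haa : a = Fin.last l := by rw [Fin.ext_iff, Fin.val_last]; have := a.isLt; omega
          by_cases hb : (b : ℕ) < l
          · rw [haa, hlast, hlt b hb, Matrix.fromBlocks_apply₂₁, Matrix.zero_apply, hP.2, if_neg]
            intro h; rw [Fin.ext_iff, Fin.val_last] at h; omega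
          · have hbb : b = Fin.last l := by
              rw [Fin.ext_iff, Fin.val_last]; have := b.isLt; omega
            rw [haa, hbb, hlast, Matrix.fromBlocks_apply₂₂, hP.1, if_pos rfl]
            simp [Matrix.one_apply]
      refine ⟨D, ?_, heq⟩
      have hdet := g.2
      rw [heq, Matrix.det_reindex_self, Matrix.det_fromBlocks_zero₂₁, Matrix.det_one,
        mul_one] at hdet
      exact hdet
  have hS0mul : ∀ {g h : Matrix.SpecialLinearGroup (Fin (l + 1)) F},
      g ∈ S0 → h ∈ S0 → g * h ∈ S0 := by
    intro g h hg hh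
    rw [hchar] at hg hh ⊢
    rw [Matrix.SpecialLinearGroup.coe_mul]
    exact sl18P_mul hg hh
  have hS0inv : ∀ {g : Matrix.SpecialLinearGroup (Fin (l + 1)) F}, g ∈ S0 → g⁻¹ ∈ S0 := by
    intro g hg
    rw [hchar] at hg ⊢
    exact sl18P_inv g hg
  have hS0one : (1 : Matrix.SpecialLinearGroup (Fin (l + 1)) F) ∈ S0 := by
    rw [hchar, Matrix.SpecialLinearGroup.coe_one]; exact sl18P_one
  -- numeric facts about small Fin elements
  have hval0 : ((0 : Fin (l + 1)) : ℕ) = 0 := rfl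
  have hval1 : ((1 : Fin (l + 1)) : ℕ) = 1 := by
    rw [Fin.val_one']; exact Nat.mod_eq_of_lt (by omega)
  -- Q for the four generators A, A⁻¹, C, C⁻¹
  have hQ_of_matrices : ∀ M : Matrix (Fin (l + 1)) (Fin (l + 1)) F,
      (M = 1 + Matrix.single 0 1 1 ∨ M = 1 - Matrix.single 0 1 1) → sl18Q M := by
    intro M hM
    have hstd : ∀ a c : Fin (l + 1), 2 ≤ (c : ℕ) ∨ 2 ≤ (a : ℕ) →
        Matrix.single (0 : Fin (l + 1)) 1 (1 : F) a c = 0 := by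
      intro a c h
      rw [Matrix.single, Matrix.of_apply, if_neg]
      rintro ⟨h0, h1⟩
      rw [← h0, ← h1, hval0, hval1] at h
      omega
    rcases hM with hM | hM <;> subst hM <;>
      exact ⟨fun a c h => by
          simp [Matrix.add_apply, Matrix.sub_apply, Matrix.one_apply, hstd a c (Or.inl h)],
        fun c b h => by
          simp [Matrix.add_apply, Matrix.sub_apply, Matrix.one_apply, hstd c b (Or.inr h),
            eq_comm]⟩
  have hQdiag : ∀ d : Fin (l + 1) → F, (∀ i : Fin (l + 1), 2 ≤ (i : ℕ) → d i = 1) →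
      sl18Q (Matrix.diagonal d) := by
    intro d hd
    constructor
    · intro a c h
      rw [Matrix.diagonal_apply]
      by_cases hac : a = c
      · rw [if_pos hac, if_pos hac, hac, hd c h]
      · rw [if_neg hac, if_neg hac]
    · intro c b h
      rw [Matrix.diagonal_apply]
      by_cases hcb : c = b
      · rw [if_pos hcb, if_pos hcb.symm, hd c h]
      · rw [if_neg hcb, if_neg (fun hx => hcb hx.symm)]
  have hQA : sl18Q (A : Matrix (Fin (l + 1)) (Fin (l + 1)) F) :=
    hQ_of_matrices _ (Or.inl hA)
  have hAinv : ((A⁻¹ : Matrix.SpecialLinearGroup (Fin (l + 1)) F) :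
      Matrix (Fin (l + 1)) (Fin (l + 1)) F) = 1 - Matrix.single 0 1 1 := by
    have h10 : (1 : Fin (l + 1)) ≠ 0 := by
      rw [Ne, Fin.ext_iff, hval0, hval1]; omega
    have hE2 : Matrix.single (0 : Fin (l + 1)) (1 : Fin (l + 1)) (1 : F) *
        Matrix.single (0 : Fin (l + 1)) (1 : Fin (l + 1)) (1 : F) = 0 :=
      Matrix.single_mul_single_of_ne _ _ _ _ h10 _
    have hMA : (A : Matrix (Fin (l + 1)) (Fin (l + 1)) F) *
        (1 - Matrix.single 0 1 1) = 1 := by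
      rw [hA, mul_sub, mul_one, add_mul, one_mul, hE2, add_zero]
      abel
    have h1 : ((A⁻¹ : Matrix.SpecialLinearGroup (Fin (l + 1)) F) :
        Matrix (Fin (l + 1)) (Fin (l + 1)) F) * A = 1 := by
      rw [← Matrix.SpecialLinearGroup.coe_mul, inv_mul_cancel, Matrix.SpecialLinearGroup.coe_one]
    calc ((A⁻¹ : Matrix.SpecialLinearGroup (Fin (l + 1)) F) :
        Matrix (Fin (l + 1)) (Fin (l + 1)) F)
        = ((A⁻¹ : Matrix.SpecialLinearGroup (Fin (l + 1)) F) :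
          Matrix (Fin (l + 1)) (Fin (l + 1)) F) * 1 := (mul_one _).symm
      _ = ((A⁻¹ : Matrix.SpecialLinearGroup (Fin (l + 1)) F) :
          Matrix (Fin (l + 1)) (Fin (l + 1)) F) *
          ((A : Matrix (Fin (l + 1)) (Fin (l + 1)) F) *
            (1 - Matrix.single 0 1 1)) := by rw [hMA]
      _ = (((A⁻¹ : Matrix.SpecialLinearGroup (Fin (l + 1)) F) :
          Matrix (Fin (l + 1)) (Fin (l + 1)) F) * (A : Matrix (Fin (l + 1)) (Fin (l + 1)) F)) *
          (1 - Matrix.single 0 1 1) := by rw [mul_assoc]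
      _ = 1 - Matrix.single 0 1 1 := by rw [h1, one_mul]
  have hQAinv : sl18Q ((A⁻¹ : Matrix.SpecialLinearGroup (Fin (l + 1)) F) :
      Matrix (Fin (l + 1)) (Fin (l + 1)) F) :=
    hQ_of_matrices _ (Or.inr hAinv)
  have hQC : sl18Q (C : Matrix (Fin (l + 1)) (Fin (l + 1)) F) := by
    rw [hC]
    exact hQdiag _ (fun i hi => by
      rw [if_neg (by omega), if_neg (by omega)])
  have hCinv : ((C⁻¹ : Matrix.SpecialLinearGroup (Fin (l + 1)) F) :
      Matrix (Fin (l + 1)) (Fin (l + 1)) F) =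
      Matrix.diagonal (fun i : Fin (l + 1) =>
        if (i : ℕ) = 0 then (lam : F) else if (i : ℕ) = 1 then ((lam⁻¹ : Fˣ) : F) else 1) := by
    have hMC : (C : Matrix (Fin (l + 1)) (Fin (l + 1)) F) *
        Matrix.diagonal (fun i : Fin (l + 1) =>
          if (i : ℕ) = 0 then (lam : F) else if (i : ℕ) = 1 then ((lam⁻¹ : Fˣ) : F) else 1)
        = 1 := by
      rw [hC, Matrix.diagonal_mul_diagonal]
      ext a b
      rw [Matrix.diagonal_apply, Matrix.one_apply]
      by_cases hab : a = b
      · rw [if_pos hab, if_pos hab]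
        split_ifs with h0 h1
        · rw [← Units.val_mul, inv_mul_cancel, Units.val_one]
        · rw [← Units.val_mul, mul_inv_cancel, Units.val_one]
        · rw [mul_one]
      · rw [if_neg hab, if_neg hab]
    have h1 : ((C⁻¹ : Matrix.SpecialLinearGroup (Fin (l + 1)) F) :
        Matrix (Fin (l + 1)) (Fin (l + 1)) F) * C = 1 := by
      rw [← Matrix.SpecialLinearGroup.coe_mul, inv_mul_cancel, Matrix.SpecialLinearGroup.coe_one]
    calc ((C⁻¹ : Matrix.SpecialLinearGroup (Fin (l + 1)) F) :
        Matrix (Fin (l + 1)) (Fin (l + 1)) F)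
        = ((C⁻¹ : Matrix.SpecialLinearGroup (Fin (l + 1)) F) :
          Matrix (Fin (l + 1)) (Fin (l + 1)) F) * 1 := (mul_one _).symm
      _ = ((C⁻¹ : Matrix.SpecialLinearGroup (Fin (l + 1)) F) :
          Matrix (Fin (l + 1)) (Fin (l + 1)) F) * ((C : Matrix (Fin (l + 1)) (Fin (l + 1)) F) *
          Matrix.diagonal (fun i : Fin (l + 1) =>
            if (i : ℕ) = 0 then (lam : F) else if (i : ℕ) = 1 then ((lam⁻¹ : Fˣ) : F) else 1)) := by
          rw [hMC]
      _ = (((C⁻¹ : Matrix.SpecialLinearGroup (Fin (l + 1)) F) :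
          Matrix (Fin (l + 1)) (Fin (l + 1)) F) * (C : Matrix (Fin (l + 1)) (Fin (l + 1)) F)) *
          Matrix.diagonal (fun i : Fin (l + 1) =>
            if (i : ℕ) = 0 then (lam : F) else if (i : ℕ) = 1 then ((lam⁻¹ : Fˣ) : F) else 1) := by
          rw [mul_assoc]
      _ = _ := by rw [h1, one_mul]
  have hQCinv : sl18Q ((C⁻¹ : Matrix.SpecialLinearGroup (Fin (l + 1)) F) :
      Matrix (Fin (l + 1)) (Fin (l + 1)) F) := by
    rw [hCinv]
    exact hQdiag _ (fun i hi => by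
      rw [if_neg (by omega), if_neg (by omega)])
  -- key conjugation lemma
  have hkey : ∀ t : Matrix.SpecialLinearGroup (Fin (l + 1)) F,
      sl18Q (t : Matrix (Fin (l + 1)) (Fin (l + 1)) F) → ∀ i : ℕ, i + 2 ≤ l →
      sl18P ((B ^ i * t * (B ^ i)⁻¹ : Matrix.SpecialLinearGroup (Fin (l + 1)) F) :
        Matrix (Fin (l + 1)) (Fin (l + 1)) F) := by
    intro t hQ i hi
    have hc2 : 2 ≤ ((⟨l - i, by omega⟩ : Fin (l + 1)) : ℕ) := by
      simp only []; omega
    have hXY : ((B ^ i : Matrix.SpecialLinearGroup (Fin (l + 1)) F) :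
        Matrix (Fin (l + 1)) (Fin (l + 1)) F) *
        ((B ^ i)⁻¹ : Matrix.SpecialLinearGroup (Fin (l + 1)) F) = 1 := by
      rw [← Matrix.SpecialLinearGroup.coe_mul, mul_inv_cancel, Matrix.SpecialLinearGroup.coe_one]
    have hYX : (((B ^ i)⁻¹ : Matrix.SpecialLinearGroup (Fin (l + 1)) F) :
        Matrix (Fin (l + 1)) (Fin (l + 1)) F) * (B ^ i : Matrix.SpecialLinearGroup (Fin (l + 1)) F) = 1 := by
      rw [← Matrix.SpecialLinearGroup.coe_mul, inv_mul_cancel, Matrix.SpecialLinearGroup.coe_one]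
    have hXcol : ∀ a, ((B ^ i : Matrix.SpecialLinearGroup (Fin (l + 1)) F) :
        Matrix (Fin (l + 1)) (Fin (l + 1)) F) a (⟨l - i, by omega⟩ : Fin (l + 1)) =
        if a = Fin.last l then 1 else 0 := fun a => sl18_colB B hB i (by omega) a
    have hXrow : ∀ b, ((B ^ i : Matrix.SpecialLinearGroup (Fin (l + 1)) F) :
        Matrix (Fin (l + 1)) (Fin (l + 1)) F) (Fin.last l) b =
        if b = (⟨l - i, by omega⟩ : Fin (l + 1)) then 1 else 0 := by
      intro b
      rw [sl18_rowB B hB i (by omega) b]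
      exact if_congr (by rw [Fin.ext_iff]) rfl rfl
    have hYcol : ∀ k, (((B ^ i)⁻¹ : Matrix.SpecialLinearGroup (Fin (l + 1)) F) :
        Matrix (Fin (l + 1)) (Fin (l + 1)) F) k (Fin.last l) =
        if k = (⟨l - i, by omega⟩ : Fin (l + 1)) then 1 else 0 := by
      intro k
      have h1 : ((((B ^ i)⁻¹ : Matrix.SpecialLinearGroup (Fin (l + 1)) F) :
          Matrix (Fin (l + 1)) (Fin (l + 1)) F) *
          (B ^ i : Matrix.SpecialLinearGroup (Fin (l + 1)) F)) k (⟨l - i, by omega⟩ : Fin (l + 1)) =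
          (1 : Matrix (Fin (l + 1)) (Fin (l + 1)) F) k (⟨l - i, by omega⟩ : Fin (l + 1)) := by
        rw [hYX]
      rw [Matrix.mul_apply] at h1
      simp only [hXcol, mul_ite, mul_one, mul_zero, Finset.sum_ite_eq', Finset.mem_univ,
        if_true] at h1
      rw [h1, Matrix.one_apply]
    have hYrow : ∀ b, (((B ^ i)⁻¹ : Matrix.SpecialLinearGroup (Fin (l + 1)) F) :
        Matrix (Fin (l + 1)) (Fin (l + 1)) F) (⟨l - i, by omega⟩ : Fin (l + 1)) b =
        if b = Fin.last l then 1 else 0 := by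
      intro b
      have h1 : (((B ^ i : Matrix.SpecialLinearGroup (Fin (l + 1)) F) :
          Matrix (Fin (l + 1)) (Fin (l + 1)) F) *
          (((B ^ i)⁻¹ : Matrix.SpecialLinearGroup (Fin (l + 1)) F) :
            Matrix (Fin (l + 1)) (Fin (l + 1)) F)) (Fin.last l) b =
          (1 : Matrix (Fin (l + 1)) (Fin (l + 1)) F) (Fin.last l) b := by
        rw [hXY]
      rw [Matrix.mul_apply] at h1
      simp only [hXrow, ite_mul, one_mul, zero_mul, Finset.sum_ite_eq', Finset.mem_univ,
        if_true] at h1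
      rw [h1, Matrix.one_apply]
      by_cases hb : b = Fin.last l <;> simp [hb, eq_comm]
    have hcoe : ((B ^ i * t * (B ^ i)⁻¹ : Matrix.SpecialLinearGroup (Fin (l + 1)) F) :
        Matrix (Fin (l + 1)) (Fin (l + 1)) F) =
        ((B ^ i : Matrix.SpecialLinearGroup (Fin (l + 1)) F) :
          Matrix (Fin (l + 1)) (Fin (l + 1)) F) *
        (t : Matrix (Fin (l + 1)) (Fin (l + 1)) F) *
        (((B ^ i)⁻¹ : Matrix.SpecialLinearGroup (Fin (l + 1)) F) :
          Matrix (Fin (l + 1)) (Fin (l + 1)) F) := by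
      rw [Matrix.SpecialLinearGroup.coe_mul, Matrix.SpecialLinearGroup.coe_mul]
    rw [hcoe]
    have htcol : ∀ j, (t : Matrix (Fin (l + 1)) (Fin (l + 1)) F) j
        (⟨l - i, by omega⟩ : Fin (l + 1)) =
        if j = (⟨l - i, by omega⟩ : Fin (l + 1)) then 1 else 0 := fun j => hQ.1 j _ hc2
    have htrow : ∀ j, (t : Matrix (Fin (l + 1)) (Fin (l + 1)) F)
        (⟨l - i, by omega⟩ : Fin (l + 1)) j =
        if j = (⟨l - i, by omega⟩ : Fin (l + 1)) then 1 else 0 := fun j => hQ.2 _ j hc2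
    constructor
    · intro a
      rw [Matrix.mul_apply]
      simp only [hYcol, mul_ite, mul_one, mul_zero, Finset.sum_ite_eq', Finset.mem_univ, if_true]
      rw [Matrix.mul_apply]
      simp only [htcol, mul_ite, mul_one, mul_zero, Finset.sum_ite_eq', Finset.mem_univ, if_true]
      exact hXcol a
    · intro b
      rw [mul_assoc, Matrix.mul_apply]
      simp only [hXrow, ite_mul, one_mul, zero_mul, Finset.sum_ite_eq', Finset.mem_univ, if_true]
      rw [Matrix.mul_apply]
      simp only [htrow, ite_mul, one_mul, zero_mul, Finset.sum_ite_eq', Finset.mem_univ, if_true]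
      exact hYrow b
  have hstep : ∀ i : ℕ, i + 2 ≤ l → ∀ t : Matrix.SpecialLinearGroup (Fin (l + 1)) F,
      sl18Q (t : Matrix (Fin (l + 1)) (Fin (l + 1)) F) → ∀ m, m ∈ S0 →
      m * B ^ i * t ∈ S0 * {B ^ i} := by
    intro i hi t hQ m hm
    rw [Set.mul_singleton]
    refine ⟨m * (B ^ i * t * (B ^ i)⁻¹), hS0mul hm ((hchar _).2 (hkey t hQ i hi)), ?_⟩
    show m * (B ^ i * t * (B ^ i)⁻¹) * B ^ i = m * B ^ i * t
    rw [mul_assoc m, mul_assoc (B ^ i * t), inv_mul_cancel, mul_one, ← mul_assoc]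
  -- the boundary is contained in the six cosets
  have hsubset : {x | x ∉ S ∧ ∃ s ∈ S, s⁻¹ * x ∈ T} ⊆
      S0 * {B ^ l} ∪ S0 * {B⁻¹} ∪ S0 * {B ^ (l - 1) * A} ∪ S0 * {B ^ (l - 1) * A⁻¹} ∪
        S0 * {B ^ (l - 1) * C} ∪ S0 * {B ^ (l - 1) * C⁻¹} := by
    rintro x ⟨hxS, s, hsS, hst⟩
    rw [hS] at hsS
    simp only [Set.mem_iUnion, Finset.mem_range, exists_prop] at hsS
    obtain ⟨i, hil, hsi⟩ := hsS
    rw [Set.mul_singleton] at hsi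
    obtain ⟨m, hm, rfl⟩ := hsi
    have hQcase : ∀ t, sl18Q ((t : Matrix.SpecialLinearGroup (Fin (l + 1)) F) :
        Matrix (Fin (l + 1)) (Fin (l + 1)) F) → x = m * B ^ i * t →
        x ∈ S0 * {B ^ (l - 1) * t} := by
      intro t hQ hxeq
      by_cases hi2 : i + 2 ≤ l
      · exact absurd (by
          rw [hS]
          exact Set.mem_biUnion (Finset.mem_range.2 hil) (hxeq ▸ hstep i hi2 t hQ m hm)) hxS
      · have hieq : i = l - 1 := by omega
        rw [Set.mul_singleton]
        exact ⟨m, hm, by show m * (B ^ (l - 1) * t) = x; rw [hxeq, hieq, mul_assoc]⟩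
    rw [hT] at hst
    simp only [Set.mem_insert_iff, Set.mem_singleton_iff] at hst
    simp only [Set.mem_union]
    rcases hst with h | h | h | h | h | h
    · exact Or.inl (Or.inl (Or.inl (Or.inr
        (hQcase A hQA (inv_mul_eq_iff_eq_mul.mp h)))))
    · exact Or.inl (Or.inl (Or.inr
        (hQcase A⁻¹ hQAinv (inv_mul_eq_iff_eq_mul.mp h))))
    · -- t = B
      have hxeq : x = m * B ^ (i + 1) := by
        rw [pow_succ, ← mul_assoc, inv_mul_eq_iff_eq_mul.mp h]
      by_cases hl1 : i + 1 < l
      · exact absurd (by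
          rw [hS]
          refine Set.mem_biUnion (Finset.mem_range.2 hl1) ?_
          rw [Set.mul_singleton]
          exact ⟨m, hm, hxeq.symm⟩) hxS
      · have hieq : l = i + 1 := by omega
        have hBl : B ^ l = B ^ (i + 1) := congrArg (fun n => B ^ n) hieq
        have hx : x ∈ S0 * {B ^ l} := by
          rw [Set.mul_singleton]
          exact ⟨m, hm, by show m * B ^ l = x; rw [hBl]; exact hxeq.symm⟩
        exact Or.inl (Or.inl (Or.inl (Or.inl (Or.inl hx))))
    · -- t = B⁻¹
      have hxeq : x = m * B ^ i * B⁻¹ := inv_mul_eq_iff_eq_mul.mp h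
      rcases Nat.eq_zero_or_pos i with h0 | hpos
      · have hx : x ∈ S0 * {B⁻¹} := by
          rw [Set.mul_singleton]
          exact ⟨m, hm, by show m * B⁻¹ = x; rw [hxeq, h0, pow_zero, mul_one]⟩
        exact Or.inl (Or.inl (Or.inl (Or.inl (Or.inr hx))))
      · exact absurd (by
          rw [hS]
          refine Set.mem_biUnion (Finset.mem_range.2 (show i - 1 < l by omega)) ?_
          rw [Set.mul_singleton]
          refine ⟨m, hm, ?_⟩
          show m * B ^ (i - 1) = x
          have hBi : B ^ i = B ^ (i - 1) * B := by rw [← pow_succ]; congr 1; omega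
          rw [hxeq, hBi, ← mul_assoc, mul_inv_cancel_right]) hxS
    · exact Or.inl (Or.inr (hQcase C hQC (inv_mul_eq_iff_eq_mul.mp h)))
    · exact Or.inr (hQcase C⁻¹ hQCinv (inv_mul_eq_iff_eq_mul.mp h))
  refine ⟨hsubset, ?_⟩
  -- counting
  have hfin : ∀ s : Set (Matrix.SpecialLinearGroup (Fin (l + 1)) F), s.Finite :=
    fun s => Set.toFinite s
  have hcosetcard : ∀ b : Matrix.SpecialLinearGroup (Fin (l + 1)) F,
      (S0 * {b}).ncard = S0.ncard := by
    intro b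
    rw [Set.mul_singleton]
    exact Set.ncard_image_of_injective _ (fun x y hxy => by
      exact mul_right_cancel hxy)
  have hBnot : ∀ d : ℕ, 1 ≤ d → d ≤ l → B ^ d ∉ S0 := by
    intro d h1 h2 hmem
    have hP := (hchar _).1 hmem
    have h3 := sl18_rowB B hB d h2 (⟨l - d, by omega⟩ : Fin (l + 1))
    rw [if_pos rfl] at h3
    have h4 := hP.2 (⟨l - d, by omega⟩ : Fin (l + 1))
    rw [h3, if_neg] at h4
    · exact one_ne_zero h4
    · intro hx
      have : l - d = l := by simpa [Fin.ext_iff] using hx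
      omega
  have hdisj : ∀ i j : ℕ, i < j → j ≤ l → Disjoint (S0 * {B ^ i}) (S0 * {B ^ j}) := by
    intro i j hij hjl
    rw [Set.disjoint_left]
    rintro x hxi hxj
    rw [Set.mul_singleton] at hxi hxj
    obtain ⟨m, hm, hme⟩ := hxi
    obtain ⟨m', hm', he⟩ := hxj
    have hme' : m * B ^ i = x := hme
    have he0 : m' * B ^ j = x := he
    have hj : B ^ j = B ^ (j - i) * B ^ i := by rw [← pow_add]; congr 1; omega
    have h2 : m' * B ^ (j - i) = m := by
      have he' : m' * B ^ j = m * B ^ i := by rw [hme', he0]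
      rw [hj, ← mul_assoc] at he'
      exact mul_right_cancel he'
    have hBji : B ^ (j - i) = m'⁻¹ * m := by rw [← h2, ← mul_assoc, inv_mul_cancel, one_mul]
    exact hBnot (j - i) (by omega) (by omega) (hBji ▸ hS0mul (hS0inv hm') hm)
  have hScard : S.ncard = l * S0.ncard := by
    have key : ∀ n : ℕ, n ≤ l → (⋃ i ∈ Finset.range n, S0 * {B ^ i}).ncard = n * S0.ncard := by
      intro n
      induction n with
      | zero => simp
      | succ n ih =>
        intro h
        rw [Finset.range_add_one, Finset.set_biUnion_insert]
        rw [Set.ncard_union_eq ?_ (hfin _) (hfin _), ih (by omega), hcosetcard]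
        · ring
        · rw [Set.disjoint_left]
          rintro x hx hx2
          simp only [Set.mem_iUnion, Finset.mem_range, exists_prop] at hx2
          obtain ⟨i, hi, hxi⟩ := hx2
          exact absurd hx (Set.disjoint_left.1 (hdisj i n hi (by omega)) hxi)
    rw [hS]; exact key l le_rfl
  have hS0pos : 0 < S0.ncard := (Set.ncard_pos (hfin _)).2 ⟨1, hS0one⟩
  have u1 := Set.ncard_union_le (S0 * {B ^ l} ∪ S0 * {B⁻¹} ∪ S0 * {B ^ (l - 1) * A} ∪
    S0 * {B ^ (l - 1) * A⁻¹} ∪ S0 * {B ^ (l - 1) * C}) (S0 * {B ^ (l - 1) * C⁻¹})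
  have u2 := Set.ncard_union_le (S0 * {B ^ l} ∪ S0 * {B⁻¹} ∪ S0 * {B ^ (l - 1) * A} ∪
    S0 * {B ^ (l - 1) * A⁻¹}) (S0 * {B ^ (l - 1) * C})
  have u3 := Set.ncard_union_le (S0 * {B ^ l} ∪ S0 * {B⁻¹} ∪ S0 * {B ^ (l - 1) * A})
    (S0 * {B ^ (l - 1) * A⁻¹})
  have u4 := Set.ncard_union_le (S0 * {B ^ l} ∪ S0 * {B⁻¹}) (S0 * {B ^ (l - 1) * A})
  have u5 := Set.ncard_union_le (S0 * {B ^ l}) (S0 * {B⁻¹})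
  simp only [hcosetcard] at u1 u2 u3 u4 u5
  have hUbd : (S0 * {B ^ l} ∪ S0 * {B⁻¹} ∪ S0 * {B ^ (l - 1) * A} ∪ S0 * {B ^ (l - 1) * A⁻¹} ∪
      S0 * {B ^ (l - 1) * C} ∪ S0 * {B ^ (l - 1) * C⁻¹}).ncard ≤ 6 * S0.ncard := by omega
  have hbd : ({x | x ∉ S ∧ ∃ s ∈ S, s⁻¹ * x ∈ T}).ncard ≤ 6 * S0.ncard :=
    le_trans (Set.ncard_le_ncard hsubset (hfin _)) hUbd
  rw [hScard]
  have hlpos : (0 : ℝ) < (l : ℝ) := by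
    have : (0 : ℕ) < l := by omega
    exact_mod_cast this
  have hdenpos : (0 : ℝ) < ((l * S0.ncard : ℕ) : ℝ) := by
    have : 0 < l * S0.ncard := Nat.mul_pos (by omega) hS0pos
    exact_mod_cast this
  rw [div_le_div_iff₀ hdenpos hlpos]
  have hbd' : (({x | x ∉ S ∧ ∃ s ∈ S, s⁻¹ * x ∈ T}).ncard : ℝ) ≤ 6 * (S0.ncard : ℝ) := by
    exact_mod_cast hbd
  have hcast : ((l * S0.ncard : ℕ) : ℝ) = (l : ℝ) * (S0.ncard : ℝ) := by push_cast; ring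
  calc (({x | x ∉ S ∧ ∃ s ∈ S, s⁻¹ * x ∈ T}).ncard : ℝ) * (l : ℝ)
      ≤ (6 * (S0.ncard : ℝ)) * (l : ℝ) := mul_le_mul_of_nonneg_right hbd' (le_of_lt hlpos)
    _ = 6 * ((l : ℝ) * (S0.ncard : ℝ)) := by ring
    _ = 6 * ((l * S0.ncard : ℕ) : ℝ) := by rw [hcast]
end
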